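/- arXiv:1112.1127 — 4 statements merged into one kernel-verified Lean document; each statement's English description precedes it below -/
import Mathlib

section
/- (Simon's absorption lemma.) Let n ≥ 1, B_ρ(y) ⊂ ℝⁿ a ball, k ∈ ℝ, Γ > 0, and let φ be a [0,∞)-valued function of balls contained in B_ρ(y) (i.e. of pairs (z,σ) with B_σ(z) ⊆ B_ρ(y)) that is subadditive: φ(A) ≤ ∑_{j=1}^N φ(A_j) whenever A, A₁, …, A_N are balls contained in B_ρ(y) with A ⊆ ⋃_{j=1}^N A_j and A ∩ A_j ≠ ∅ for every j. Then there exist ε₀ = ε₀(k,n) > 0 and C = C(k,n) < ∞ such that: if σ^k φ(B_{σ/2}(z)) ≤ ε₀ σ^k φ(B_σ(z)) + Γ holds for every ball with B_{2σ}(z) ⊆ B_ρ(y), then ρ^k φ(B_{ρ/2}(y)) ≤ C Γ. -/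
open MeasureTheory Metric Filter Set
open scoped ENNReal Topology NNReal

noncomputable section

/-- Euclidean space `ℝⁿ`. -/
abbrev Euc (n : ℕ) : Type := EuclideanSpace ℝ (Fin n)

/-- Euclidean norm of a finitely-indexed family of reals. -/
def euclNorm {ι : Type} [Fintype ι] (v : ι → ℝ) : ℝ :=
  Real.sqrt (∑ i, v i ^ 2)

/-- The quantity `sup_{x ∈ O, r > 0} r^(-β) ∫_{B_r(x) ∩ O} ρ^p`, i.e. the `p`-th power of the
Morrey norm `‖·‖_{M^{p,β}(O)}` of a function whose pointwise (Euclidean) magnitude is `ρ`. -/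
def morreySup {n : ℕ} (p β : ℝ) (O : Set (Euc n)) (ρ : Euc n → ℝ) : ℝ≥0∞ :=
  ⨆ (x : Euc n) (_ : x ∈ O) (r : ℝ) (_ : 0 < r),
    ENNReal.ofReal (r ^ (-β)) * ∫⁻ y in Metric.ball x r ∩ O, ENNReal.ofReal (ρ y ^ p)

/-- The Morrey norm `‖·‖_{M^{p,β}(O)}` of a function with pointwise magnitude `ρ`. -/
def morreyNorm {n : ℕ} (p β : ℝ) (O : Set (Euc n)) (ρ : Euc n → ℝ) : ℝ≥0∞ :=
  morreySup p β O ρ ^ (1 / p)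

/-- A smooth test function compactly supported inside the open set `O`. -/
def IsTestFun {n : ℕ} (O : Set (Euc n)) (φ : Euc n → ℝ) : Prop :=
  ContDiff ℝ (⊤ : ℕ∞) φ ∧ HasCompactSupport φ ∧ tsupport φ ⊆ O

/-- The `k`-th partial derivative. -/
def pd {n : ℕ} (k : Fin n) (φ : Euc n → ℝ) (x : Euc n) : ℝ :=
  fderiv ℝ φ x (EuclideanSpace.single k 1)

lemma euc_cover_aux (n : ℕ) :
    ∃ (N : ℕ) (T : Fin N → Euc n), (∀ i, ‖T i‖ ≤ 1) ∧
      ∀ v : Euc n, ‖v‖ ≤ 1 → ∃ i, dist v (T i) < 1/8 := by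
  classical
  obtain ⟨b', hb'sub, hb'fin, hb'cov⟩ :=
    (isCompact_closedBall (0 : Euc n) 1).elim_finite_subcover_image
      (c := fun t => ball t (1/8))
      (fun t _ => isOpen_ball)
      (fun x hx => mem_iUnion₂.2 ⟨x, hx, mem_ball_self (by norm_num)⟩)
  set F : Finset (Euc n) := hb'fin.toFinset with hF
  refine ⟨F.card, fun i => (F.equivFin.symm i : Euc n), ?_, ?_⟩
  · intro i
    have hmem : ((F.equivFin.symm i : F) : Euc n) ∈ b' :=
      hb'fin.mem_toFinset.mp (F.equivFin.symm i).2
    have := hb'sub hmem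
    simpa [mem_closedBall, dist_zero_right] using this
  · intro v hv
    have hv' : v ∈ closedBall (0 : Euc n) 1 := by
      simpa [mem_closedBall, dist_zero_right] using hv
    obtain ⟨t, ht, htv⟩ := mem_iUnion₂.1 (hb'cov hv')
    have htF : t ∈ F := hb'fin.mem_toFinset.mpr ht
    refine ⟨F.equivFin ⟨t, htF⟩, ?_⟩
    have hTt : ((F.equivFin.symm (F.equivFin ⟨t, htF⟩) : F) : Euc n) = t :=
      congrArg Subtype.val (Equiv.symm_apply_apply F.equivFin ⟨t, htF⟩)
    simpa only [hTt] using mem_ball.mp htv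

set_option maxHeartbeats 2000000 in
/-- **Simon's absorption lemma** (Lemma C.1): if `φ` is a nonnegative subadditive function
of balls in `B_ρ(y)` and `σ^k φ(B_{σ/2}(z)) ≤ ε₀ σ^k φ(B_σ(z)) + Γ` whenever
`B_{2σ}(z) ⊆ B_ρ(y)`, then `ρ^k φ(B_{ρ/2}(y)) ≤ C Γ`, where `ε₀ = ε₀(k,n) > 0` and
`C = C(k,n)`. A ball is encoded by its centre and radius. -/
theorem simon_absorption (n : ℕ) (hn : 1 ≤ n) (k : ℝ) :
    ∃ ε₀ : ℝ, 0 < ε₀ ∧ ∃ C : ℝ, 0 < C ∧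
      ∀ (y : Euc n) (ρ : ℝ), 0 < ρ →
        ∀ (φ : Euc n → ℝ → ℝ) (Γ : ℝ), 0 < Γ →
          -- φ is [0,∞)-valued
          (∀ z σ, 0 ≤ φ z σ) →
          -- φ is subadditive on balls contained in B_ρ(y)
          (∀ (N : ℕ) (z : Euc n) (σ : ℝ) (zs : Fin N → Euc n) (σs : Fin N → ℝ),
            Metric.ball z σ ⊆ Metric.ball y ρ →
            (∀ j, Metric.ball (zs j) (σs j) ⊆ Metric.ball y ρ) →
            Metric.ball z σ ⊆ ⋃ j, Metric.ball (zs j) (σs j) →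
            (∀ j, (Metric.ball z σ ∩ Metric.ball (zs j) (σs j)).Nonempty) →
            φ z σ ≤ ∑ j, φ (zs j) (σs j)) →
          -- hypothesis: decay with absorption constant ε₀
          (∀ (z : Euc n) (σ : ℝ), 0 < σ → Metric.ball z (2 * σ) ⊆ Metric.ball y ρ →
            σ ^ k * φ z (σ / 2) ≤ ε₀ * σ ^ k * φ z σ + Γ) →
          ρ ^ k * φ y (ρ / 2) ≤ C * Γ := by
  obtain ⟨N, T, hTnorm, hTcov⟩ := euc_cover_aux n
  have h4 : (0:ℝ) < (4:ℝ) ^ k := Real.rpow_pos_of_pos (by norm_num) k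
  have h8 : (0:ℝ) < (8:ℝ) ^ k := Real.rpow_pos_of_pos (by norm_num) k
  refine ⟨(2 * ((N:ℝ)+1) * (1 + (4:ℝ)^k))⁻¹, by positivity, 2 * (8:ℝ)^k * ((N:ℝ)+1),
    by positivity, ?_⟩
  intro y ρ hρ φ Γ hΓ hφ0 hsub hdecay
  set ε₀ : ℝ := (2 * ((N:ℝ)+1) * (1 + (4:ℝ)^k))⁻¹ with hε₀
  have hε₀pos : 0 < ε₀ := by positivity
  set M : ℝ := φ y ρ with hM
  have hM0 : 0 ≤ M := hφ0 y ρ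
  -- monotonicity
  have mono : ∀ z σ', 0 < σ' → Metric.ball z σ' ⊆ Metric.ball y ρ → φ z σ' ≤ M := by
    intro z σ' hσ' hss
    have := hsub 1 z σ' (fun _ => y) (fun _ => ρ) hss (fun _ => subset_rfl)
      (by intro x hx; exact mem_iUnion.2 ⟨0, hss hx⟩)
      (by
        intro j
        exact ⟨z, mem_ball_self hσ', hss (mem_ball_self hσ')⟩)
    simpa using this
  -- covering step
  have cover : ∀ z (σ' : ℝ), 0 < σ' → dist z y + 2*σ' ≤ ρ →
      φ z σ' ≤ ∑ i : Fin N, φ (z + σ' • T i) (σ'/8) := by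
    intro z σ' hσ' hadm
    have hdw : ∀ i, dist (z + σ' • T i) z ≤ σ' := by
      intro i
      have : dist (z + σ' • T i) z = ‖σ' • T i‖ := by
        rw [dist_eq_norm]; congr 1; abel
      rw [this, norm_smul, Real.norm_eq_abs, abs_of_pos hσ']
      nlinarith [hTnorm i, norm_nonneg (T i)]
    refine hsub N z σ' (fun i => z + σ' • T i) (fun _ => σ'/8)
      (ball_subset_ball' (by linarith)) ?_ ?_ ?_
    · intro j
      refine ball_subset_ball' ?_
      have := dist_triangle (z + σ' • T j) z y
      have := hdw j
      linarith
    · intro x hx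
      rw [mem_ball] at hx
      set v : Euc n := σ'⁻¹ • (x - z) with hv
      have hxv : x - z = σ' • v := by
        rw [hv, smul_smul, mul_inv_cancel₀ (ne_of_gt hσ'), one_smul]
      have hvn : ‖v‖ ≤ 1 := by
        rw [hv, norm_smul, Real.norm_eq_abs, abs_of_pos (inv_pos.2 hσ')]
        rw [dist_eq_norm] at hx
        rw [inv_mul_le_iff₀ hσ']
        linarith
      obtain ⟨i, hi⟩ := hTcov v hvn
      refine mem_iUnion.2 ⟨i, ?_⟩
      rw [mem_ball, dist_eq_norm]
      have : x - (z + σ' • T i) = σ' • (v - T i) := by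
        rw [smul_sub, ← hxv]; abel
      rw [this, norm_smul, Real.norm_eq_abs, abs_of_pos hσ']
      rw [dist_eq_norm] at hi
      calc σ' * ‖v - T i‖ < σ' * (1/8) := by
            exact mul_lt_mul_of_pos_left hi hσ'
        _ = σ'/8 := by ring
    · intro j
      refine ⟨z + (15/16*σ') • T j, ?_, ?_⟩
      · rw [mem_ball]
        have : dist (z + (15/16*σ') • T j) z = ‖(15/16*σ') • T j‖ := by
          rw [dist_eq_norm]; congr 1; abel
        rw [this, norm_smul, Real.norm_eq_abs, abs_of_pos (by linarith : (0:ℝ) < 15/16*σ')]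
        nlinarith [hTnorm j, norm_nonneg (T j)]
      · rw [mem_ball]
        have : dist (z + (15/16*σ') • T j) (z + σ' • T j) = ‖(15/16*σ' - σ') • T j‖ := by
          rw [dist_eq_norm]
          congr 1
          rw [sub_smul]; abel
        rw [this, norm_smul, Real.norm_eq_abs]
        have : |15/16*σ' - σ'| = σ'/16 := by
          rw [abs_of_nonpos (by linarith)]; ring
        rw [this]
        nlinarith [hTnorm j, norm_nonneg (T j)]
  -- constants
  have he1 : ε₀ * (N:ℝ) * (4:ℝ)^k ≤ 1/2 := by
    rw [hε₀, inv_mul_eq_div, div_mul_eq_mul_div, div_le_iff₀ (by positivity)]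
    nlinarith [h4, Nat.cast_nonneg (α := ℝ) N]
  have he2 : ε₀ * (N:ℝ) ≤ 1/2 := by
    rw [hε₀, inv_mul_eq_div, div_le_iff₀ (by positivity)]
    nlinarith [h4, Nat.cast_nonneg (α := ℝ) N]
  -- main induction
  have key : ∀ m : ℕ, ∀ z (σ' : ℝ), 0 < σ' → dist z y + 2*σ' ≤ ρ →
      σ'^k * φ z (σ'/2) ≤ 2*Γ + (1/2:ℝ)^m * (σ'^k * M) := by
    intro m
    induction m with
    | zero =>
      intro z σ' hσ' hadm
      have hk : (0:ℝ) < σ'^k := Real.rpow_pos_of_pos hσ' k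
      have h1 : φ z (σ'/2) ≤ M :=
        mono z (σ'/2) (by linarith) (ball_subset_ball' (by linarith))
      have := mul_le_mul_of_nonneg_left h1 hk.le
      simp only [pow_zero, one_mul]
      linarith
    | succ m ih =>
      intro z σ' hσ' hadm
      have hk : (0:ℝ) < σ'^k := Real.rpow_pos_of_pos hσ' k
      have hquarter : (σ'/4)^k = σ'^k / (4:ℝ)^k := Real.div_rpow hσ'.le (by norm_num) k
      have hstep1 : σ'^k * φ z (σ'/2) ≤ ε₀ * σ'^k * φ z σ' + Γ :=
        hdecay z σ' hσ' (ball_subset_ball' (by linarith))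
      have hcov := cover z σ' hσ' hadm
      -- bound each covering ball by ih
      have hball : ∀ i : Fin N, σ'^k * φ (z + σ' • T i) (σ'/8)
          ≤ (4:ℝ)^k * (2*Γ) + (1/2:ℝ)^m * (σ'^k * M) := by
        intro i
        have hdw : dist (z + σ' • T i) z ≤ σ' := by
          have h1 : dist (z + σ' • T i) z = ‖σ' • T i‖ := by
            rw [dist_eq_norm]; congr 1; abel
          rw [h1, norm_smul, Real.norm_eq_abs, abs_of_pos hσ']
          nlinarith [hTnorm i, norm_nonneg (T i)]
        have hadm' : dist (z + σ' • T i) y + 2*(σ'/4) ≤ ρ := by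
          have := dist_triangle (z + σ' • T i) z y
          linarith
        have := ih (z + σ' • T i) (σ'/4) (by linarith) hadm'
        have heq : σ'/4/2 = σ'/8 := by ring
        rw [heq] at this
        -- multiply by 4^k
        have h2 := mul_le_mul_of_nonneg_left this h4.le
        calc σ'^k * φ (z + σ' • T i) (σ'/8)
            = (4:ℝ)^k * ((σ'/4)^k * φ (z + σ' • T i) (σ'/8)) := by
              rw [hquarter]; field_simp
          _ ≤ (4:ℝ)^k * (2*Γ + (1/2:ℝ)^m * ((σ'/4)^k * M)) := h2
          _ = (4:ℝ)^k * (2*Γ) + (1/2:ℝ)^m * ((4:ℝ)^k * (σ'/4)^k * M) := by ring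
          _ = (4:ℝ)^k * (2*Γ) + (1/2:ℝ)^m * (σ'^k * M) := by
              rw [hquarter]; field_simp
      have hsum : σ'^k * φ z σ' ≤ (N:ℝ) * ((4:ℝ)^k * (2*Γ) + (1/2:ℝ)^m * (σ'^k * M)) := by
        calc σ'^k * φ z σ' ≤ σ'^k * ∑ i : Fin N, φ (z + σ' • T i) (σ'/8) :=
              mul_le_mul_of_nonneg_left hcov hk.le
          _ = ∑ i : Fin N, σ'^k * φ (z + σ' • T i) (σ'/8) := Finset.mul_sum _ _ _
          _ ≤ ∑ i : Fin N, ((4:ℝ)^k * (2*Γ) + (1/2:ℝ)^m * (σ'^k * M)) :=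
              Finset.sum_le_sum (fun i _ => hball i)
          _ = (N:ℝ) * ((4:ℝ)^k * (2*Γ) + (1/2:ℝ)^m * (σ'^k * M)) := by
              rw [Finset.sum_const, Finset.card_univ, Fintype.card_fin, nsmul_eq_mul]
      have hφz : 0 ≤ φ z σ' := hφ0 z σ'
      have hm : (0:ℝ) ≤ (1/2:ℝ)^m * (σ'^k * M) := by positivity
      calc σ'^k * φ z (σ'/2) ≤ ε₀ * σ'^k * φ z σ' + Γ := hstep1
        _ = ε₀ * (σ'^k * φ z σ') + Γ := by ring
        _ ≤ ε₀ * ((N:ℝ) * ((4:ℝ)^k * (2*Γ) + (1/2:ℝ)^m * (σ'^k * M))) + Γ := by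
            have := mul_le_mul_of_nonneg_left hsum hε₀pos.le
            linarith
        _ = (ε₀ * (N:ℝ) * (4:ℝ)^k) * (2*Γ) + (ε₀ * (N:ℝ)) * ((1/2:ℝ)^m * (σ'^k * M)) + Γ := by
            ring
        _ ≤ (1/2) * (2*Γ) + (1/2) * ((1/2:ℝ)^m * (σ'^k * M)) + Γ := by
            have h1 : (ε₀ * (N:ℝ) * (4:ℝ)^k) * (2*Γ) ≤ (1/2) * (2*Γ) :=
              mul_le_mul_of_nonneg_right he1 (by linarith)
            have h2 : (ε₀ * (N:ℝ)) * ((1/2:ℝ)^m * (σ'^k * M)) ≤ (1/2) * ((1/2:ℝ)^m * (σ'^k * M)) :=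
              mul_le_mul_of_nonneg_right he2 hm
            linarith
        _ ≤ 2*Γ + (1/2:ℝ)^(m+1) * (σ'^k * M) := by
            rw [pow_succ]
            nlinarith
  -- remove the error term
  have final : ∀ z (σ' : ℝ), 0 < σ' → dist z y + 2*σ' ≤ ρ →
      σ'^k * φ z (σ'/2) ≤ 2*Γ := by
    intro z σ' hσ' hadm
    have hlim : Tendsto (fun m : ℕ => 2*Γ + (1/2:ℝ)^m * (σ'^k * M)) atTop (𝓝 (2*Γ + 0 * (σ'^k * M))) := by
      exact (tendsto_const_nhds.add ((tendsto_pow_atTop_nhds_zero_of_lt_one (by norm_num) (by norm_num)).mul_const _))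
    rw [zero_mul, add_zero] at hlim
    exact ge_of_tendsto' hlim (fun m => key m z σ' hσ' hadm)
  -- conclusion
  have hcovy := cover y (ρ/2) (by linarith) (by simp; linarith)
  have heighth : (ρ/8)^k = ρ^k / (8:ℝ)^k := Real.div_rpow hρ.le (by norm_num) k
  have hballs : ∀ i : Fin N, ρ^k * φ (y + (ρ/2) • T i) (ρ/2/8) ≤ (8:ℝ)^k * (2*Γ) := by
    intro i
    have hdw : dist (y + (ρ/2) • T i) y ≤ ρ/2 := by
      have h1 : dist (y + (ρ/2) • T i) y = ‖(ρ/2) • T i‖ := by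
        rw [dist_eq_norm]; congr 1; abel
      rw [h1, norm_smul, Real.norm_eq_abs, abs_of_pos (by linarith : (0:ℝ) < ρ/2)]
      nlinarith [hTnorm i, norm_nonneg (T i)]
    have := final (y + (ρ/2) • T i) (ρ/8) (by linarith) (by linarith)
    have heq : ρ/8/2 = ρ/2/8 := by ring
    rw [heq] at this
    have h2 := mul_le_mul_of_nonneg_left this h8.le
    calc ρ^k * φ (y + (ρ/2) • T i) (ρ/2/8)
        = (8:ℝ)^k * ((ρ/8)^k * φ (y + (ρ/2) • T i) (ρ/2/8)) := by
          rw [heighth]; field_simp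
      _ ≤ (8:ℝ)^k * (2*Γ) := h2
  have hkρ : (0:ℝ) < ρ^k := Real.rpow_pos_of_pos hρ k
  calc ρ^k * φ y (ρ/2) ≤ ρ^k * ∑ i : Fin N, φ (y + (ρ/2) • T i) (ρ/2/8) :=
        mul_le_mul_of_nonneg_left hcovy hkρ.le
    _ = ∑ i : Fin N, ρ^k * φ (y + (ρ/2) • T i) (ρ/2/8) := Finset.mul_sum _ _ _
    _ ≤ ∑ i : Fin N, (8:ℝ)^k * (2*Γ) := Finset.sum_le_sum (fun i _ => hballs i)
    _ = (N:ℝ) * ((8:ℝ)^k * (2*Γ)) := by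
        rw [Finset.sum_const, Finset.card_univ, Fintype.card_fin, nsmul_eq_mul]
    _ ≤ 2 * (8:ℝ)^k * ((N:ℝ)+1) * Γ := by nlinarith [Nat.cast_nonneg (α := ℝ) N]


end
end

section
/- (Multiplication of local Hardy functions by Hölder functions.) Let n ≥ 1 and 0 < γ ≤ 1. There exists C = C(γ,n,ϑ) such that for every h ∈ L¹(ℝⁿ) with ‖h‖_{h¹(ℝⁿ)} < ∞ and every bounded γ-Hölder continuous g : ℝⁿ → ℝ, the product gh satisfies ‖gh‖_{h¹(ℝⁿ)} ≤ C ‖g‖_{C^{0,γ}(ℝⁿ)} ‖h‖_{h¹(ℝⁿ)}, where ‖g‖_{C^{0,γ}} := sup |g| + sup_{x≠y} |g(x)−g(y)|/|x−y|^γ. -/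
open MeasureTheory Metric Filter Set
open scoped ENNReal Topology NNReal

noncomputable section

/-- The (global) maximal function `g_*(x) = sup_{t>0} |(ϑ_t * g)(x)|`, where
`ϑ_t(x) = t^{-n} ϑ(x/t)`, valued in `ℝ≥0∞`. -/
def maxFun {n : ℕ} (ϑ g : Euc n → ℝ) (x : Euc n) : ℝ≥0∞ :=
  ⨆ (t : ℝ) (_ : 0 < t),
    ENNReal.ofReal |∫ y, t ^ (-(n : ℝ)) * ϑ (t⁻¹ • (x - y)) * g y|

/-- The local maximal function `g_{~*}(x) = sup_{0<t<1} |(ϑ_t * g)(x)|`. -/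
def maxFunLoc {n : ℕ} (ϑ g : Euc n → ℝ) (x : Euc n) : ℝ≥0∞ :=
  ⨆ (t : ℝ) (_ : 0 < t) (_ : t < 1),
    ENNReal.ofReal |∫ y, t ^ (-(n : ℝ)) * ϑ (t⁻¹ • (x - y)) * g y|

/-- The Hardy space norm `‖g‖_{H¹} = ‖g_*‖_{L¹}`. -/
def hardyNorm {n : ℕ} (ϑ g : Euc n → ℝ) : ℝ≥0∞ := ∫⁻ x, maxFun ϑ g x

/-- The local Hardy space norm `‖g‖_{h¹} = ‖g_{~*}‖_{L¹}`. -/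
def hardyNormLoc {n : ℕ} (ϑ g : Euc n → ℝ) : ℝ≥0∞ := ∫⁻ x, maxFunLoc ϑ g x

/-- `ϑ` is an admissible test function for Hardy-space maximal functions: smooth, supported in
the unit ball, with `‖∇ϑ‖_{L^∞} ≤ 1` and `∫ ϑ = 1`. -/
def IsHardyTest {n : ℕ} (ϑ : Euc n → ℝ) : Prop :=
  IsTestFun (Metric.ball (0 : Euc n) 1) ϑ ∧ (∀ x, ‖fderiv ℝ ϑ x‖ ≤ 1) ∧ (∫ x, ϑ x) = 1

section AuxLemmas

variable {n : ℕ} {ϑ : Euc n → ℝ}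

lemma IsHardyTest.theta_eq_zero (hϑ : IsHardyTest ϑ) {z : Euc n} (hz : 1 ≤ ‖z‖) : ϑ z = 0 := by
  apply image_eq_zero_of_notMem_tsupport
  intro hm
  have h2 := hϑ.1.2.2 hm
  rw [mem_ball, dist_zero_right] at h2
  linarith

lemma IsHardyTest.lip (hϑ : IsHardyTest ϑ) : LipschitzWith 1 ϑ :=
  lipschitzWith_of_nnnorm_fderiv_le (hϑ.1.1.differentiable (by simp))
    (fun x => by rw [← NNReal.coe_le_coe]; simpa using hϑ.2.1 x)

lemma IsHardyTest.abs_le_one (hn : 1 ≤ n) (hϑ : IsHardyTest ϑ) (z : Euc n) : |ϑ z| ≤ 1 := by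
  set e : Euc n := EuclideanSpace.single (⟨0, hn⟩ : Fin n) (1 : ℝ) with he
  have hne : ‖e‖ = 1 := by simp [he]
  have key : ∀ w : Euc n, 1 ≤ ‖w‖ → ϑ w = 0 := fun w hw => hϑ.theta_eq_zero hw
  have key2 : ∀ w : Euc n, 1 ≤ ‖w‖ → |ϑ z| ≤ ‖z - w‖ := by
    intro w hw
    have := hϑ.lip.dist_le_mul z w
    rw [dist_eq_norm, dist_eq_norm, key w hw] at this
    simpa using this
  by_cases h1 : 1 ≤ ‖z + e‖
  · have := key2 _ h1
    have hz : z - (z + e) = -e := by abel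
    rw [hz, norm_neg, hne] at this
    exact this
  · push_neg at h1
    have h2 : 1 ≤ ‖z - e‖ := by
      have htri : ‖(z + e) - (z - e)‖ ≤ ‖z + e‖ + ‖z - e‖ := norm_sub_le _ _
      have h2e : ‖(z + e) - (z - e)‖ = 2 := by
        have he2 : (z + e) - (z - e) = (2:ℝ) • e := by
          rw [two_smul]; abel
        rw [he2, norm_smul, hne]; norm_num
      rw [h2e] at htri; linarith
    have := key2 _ h2
    have hz : z - (z - e) = e := by abel
    rw [hz, hne] at this
    exact this

lemma IsHardyTest.scaled_zero (hϑ : IsHardyTest ϑ) {t : ℝ} (ht : 0 < t) {x y : Euc n}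
    (hd : t ≤ dist x y) : ϑ (t⁻¹ • (x - y)) = 0 := by
  apply hϑ.theta_eq_zero
  rw [norm_smul, norm_inv, Real.norm_eq_abs, abs_of_pos ht, ← dist_eq_norm]
  rw [le_inv_mul_iff₀ ht, mul_one]
  exact hd

lemma IsHardyTest.theta_integral (hϑ : IsHardyTest ϑ) {t : ℝ} (ht : 0 < t) (x : Euc n) :
    ∫ y, t ^ (-(n : ℝ)) * ϑ (t⁻¹ • (x - y)) = 1 := by
  rw [integral_sub_left_eq_self (fun z => t ^ (-(n : ℝ)) * ϑ (t⁻¹ • z)) volume x]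
  rw [integral_const_mul]
  rw [Measure.integral_comp_inv_smul_of_nonneg volume ϑ ht.le, hϑ.2.2, finrank_euclideanSpace_fin]
  rw [smul_eq_mul, mul_one, ← Real.rpow_natCast t n, ← Real.rpow_add ht]
  simp

lemma IsHardyTest.ker_continuous (hϑ : IsHardyTest ϑ) (t : ℝ) (x : Euc n) :
    Continuous (fun y : Euc n => t ^ (-(n : ℝ)) * ϑ (t⁻¹ • (x - y))) :=
  continuous_const.mul (hϑ.1.1.continuous.comp
    (by fun_prop : Continuous fun y : Euc n => t⁻¹ • (x - y)))

lemma IsHardyTest.ker_integrable (hϑ : IsHardyTest ϑ) {t : ℝ} (ht : 0 < t) (x : Euc n) :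
    Integrable (fun y : Euc n => t ^ (-(n : ℝ)) * ϑ (t⁻¹ • (x - y))) volume := by
  apply (hϑ.ker_continuous t x).integrable_of_hasCompactSupport
  apply HasCompactSupport.intro (isCompact_closedBall x t)
  intro y hy
  have hd : t ≤ dist x y := by
    rw [mem_closedBall, not_le] at hy
    rw [dist_comm]; exact hy.le
  simp [hϑ.scaled_zero ht hd]

lemma IsHardyTest.ker_mul_integrable (hn : 1 ≤ n) (hϑ : IsHardyTest ϑ) {t : ℝ} (ht : 0 < t)
    (x : Euc n) {c : Euc n → ℝ} (hc : Continuous c) {B : ℝ} (hB : ∀ y, |c y| ≤ B)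
    {h : Euc n → ℝ} (hh : Integrable h volume) :
    Integrable (fun y => t ^ (-(n : ℝ)) * ϑ (t⁻¹ • (x - y)) * (c y * h y)) volume := by
  have heq : (fun y => t ^ (-(n : ℝ)) * ϑ (t⁻¹ • (x - y)) * (c y * h y))
      = fun y => (t ^ (-(n : ℝ)) * ϑ (t⁻¹ • (x - y)) * c y) * h y := by
    funext y; ring
  rw [heq]
  refine hh.bdd_mul (((hϑ.ker_continuous t x).mul hc).aestronglyMeasurable)
    (c := t ^ (-(n : ℝ)) * B) (Filter.Eventually.of_forall fun y => ?_)
  have h0 : (0 : ℝ) ≤ t ^ (-(n : ℝ)) := Real.rpow_nonneg ht.le _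
  have hB0 : 0 ≤ B := le_trans (abs_nonneg _) (hB y)
  have h1 := hϑ.abs_le_one hn (t⁻¹ • (x - y))
  rw [Real.norm_eq_abs, abs_mul, abs_mul, abs_of_nonneg h0]
  calc t ^ (-(n:ℝ)) * |ϑ (t⁻¹ • (x - y))| * |c y| ≤ t ^ (-(n:ℝ)) * 1 * B := by
        gcongr <;> first | exact h1 | exact hB y
    _ = t ^ (-(n:ℝ)) * B := by ring

lemma holder_continuous_aux {γ Hg : ℝ} (hγ0 : 0 < γ) {g : Euc n → ℝ}
    (hHol : ∀ x y, |g x - g y| ≤ Hg * dist x y ^ γ) : Continuous g := by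
  rw [continuous_iff_continuousAt]
  intro x
  have hd : Tendsto (fun y : Euc n => dist y x) (𝓝 x) (𝓝 0) := by
    have := (continuous_id.dist (continuous_const : Continuous fun _ : Euc n => x)).tendsto x
    simpa using this
  have h1 : Tendsto (fun y : Euc n => dist y x ^ γ) (𝓝 x) (𝓝 0) := by
    have hc : ContinuousAt (fun r : ℝ => r ^ γ) 0 :=
      Real.continuousAt_rpow_const 0 γ (Or.inr hγ0.le)
    have := hc.tendsto.comp hd
    simpa [Function.comp_def, Real.zero_rpow hγ0.ne'] using this
  have h2 : Tendsto (fun y => g y - g x) (𝓝 x) (𝓝 0) :=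
    squeeze_zero_norm (fun y => by simpa [Real.norm_eq_abs] using hHol y x)
      (by simpa using h1.const_mul Hg)
  have h3 := h2.add_const (g x)
  simp only [zero_add, sub_add_cancel] at h3
  exact h3

end AuxLemmas

section Leb

variable {n : ℕ} {ϑ : Euc n → ℝ}

lemma abs_conv_sub_le (hn : 1 ≤ n) (hϑ : IsHardyTest ϑ) {h : Euc n → ℝ}
    (hh : Integrable h volume) {t : ℝ} (ht : 0 < t) (x : Euc n) :
    |(∫ y, t ^ (-(n : ℝ)) * ϑ (t⁻¹ • (x - y)) * h y) - h x| ≤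
      (volume (ball (0 : Euc n) 1)).toReal * ⨍ y in closedBall x t, ‖h y - h x‖ := by
  set K : Euc n → ℝ := fun y => t ^ (-(n : ℝ)) * ϑ (t⁻¹ • (x - y)) with hK
  have hKi : Integrable K volume := hϑ.ker_integrable ht x
  have hKh : Integrable (fun y => K y * h y) volume := by
    have := hϑ.ker_mul_integrable hn ht x (continuous_const : Continuous fun _ : Euc n => (1:ℝ))
      (B := 1) (fun y => by norm_num) hh
    simpa [hK] using this
  have hconst : (∫ y, K y * h x) = h x := by
    rw [integral_mul_const]
    simp only [hK]
    rw [hϑ.theta_integral ht x, one_mul]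
  have hA : (∫ y, t ^ (-(n : ℝ)) * ϑ (t⁻¹ • (x - y)) * h y) = ∫ y, K y * h y := by
    simp only [hK]
  have hsub : (∫ y, K y * h y) - h x = ∫ y, K y * (h y - h x) := by
    have e1 : (fun y => K y * (h y - h x)) = fun y => K y * h y - K y * h x :=
      funext fun y => by ring
    rw [e1, integral_sub hKh (hKi.mul_const (h x)), hconst]
  rw [hA, hsub]
  have hb_int : Integrable
      ((closedBall x t).indicator (fun y => t ^ (-(n : ℝ)) * ‖h y - h x‖)) volume := by
    apply (IntegrableOn.integrable_indicator _ measurableSet_closedBall)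
    exact (((hh.integrableOn.sub (integrableOn_const measure_closedBall_lt_top.ne)).norm).const_mul _)
  have hbound : ‖∫ y, K y * (h y - h x)‖ ≤
      ∫ y, (closedBall x t).indicator (fun y => t ^ (-(n : ℝ)) * ‖h y - h x‖) y := by
    apply norm_integral_le_of_norm_le hb_int
    apply Filter.Eventually.of_forall
    intro y
    by_cases hy : y ∈ closedBall x t
    · rw [indicator_of_mem hy, Real.norm_eq_abs, abs_mul]
      have h0 : (0:ℝ) ≤ t ^ (-(n:ℝ)) := Real.rpow_nonneg ht.le _
      simp only [hK]
      rw [abs_mul, abs_of_nonneg h0]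
      calc t ^ (-(n:ℝ)) * |ϑ (t⁻¹ • (x - y))| * |h y - h x|
          ≤ t ^ (-(n:ℝ)) * 1 * |h y - h x| := by
            gcongr; exact hϑ.abs_le_one hn _
        _ = t ^ (-(n:ℝ)) * ‖h y - h x‖ := by rw [Real.norm_eq_abs]; ring
    · rw [indicator_of_notMem hy]
      have hd : t ≤ dist x y := by
        rw [mem_closedBall, not_le] at hy
        rw [dist_comm]; exact hy.le
      simp only [hK]
      simp [hϑ.scaled_zero ht hd]
  rw [Real.norm_eq_abs] at hbound
  refine hbound.trans ?_
  have hV : 0 < (volume (ball (0 : Euc n) 1)).toReal :=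
    ENNReal.toReal_pos (measure_ball_pos volume 0 one_pos).ne' measure_ball_lt_top.ne
  have hμ : (volume (closedBall x t)).toReal
      = t ^ n * (volume (ball (0 : Euc n) 1)).toReal := by
    rw [Measure.addHaar_closedBall volume x ht.le, finrank_euclideanSpace_fin]
    rw [ENNReal.toReal_mul, ENNReal.toReal_ofReal (by positivity)]
  have havg : (∫ y in closedBall x t, ‖h y - h x‖)
      = (volume (closedBall x t)).toReal * ⨍ y in closedBall x t, ‖h y - h x‖ := by
    rw [setAverage_eq, smul_eq_mul, measureReal_def, ← mul_assoc, mul_inv_cancel₀, one_mul]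
    rw [hμ]
    positivity
  rw [integral_indicator measurableSet_closedBall, integral_const_mul, havg, hμ]
  have ht1 : t ^ (-(n : ℝ)) * t ^ n = 1 := by
    rw [← Real.rpow_natCast t n, ← Real.rpow_add ht]; simp
  apply le_of_eq
  linear_combination ((⨍ y in closedBall x t, ‖h y - h x‖) *
    (volume (ball (0 : Euc n) 1)).toReal) * ht1

lemma enorm_le_maxFunLoc (hn : 1 ≤ n) (hϑ : IsHardyTest ϑ) {h : Euc n → ℝ}
    (hh : Integrable h volume) :
    ∀ᵐ x, (‖h x‖₊ : ℝ≥0∞) ≤ maxFunLoc ϑ h x := by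
  filter_upwards [IsUnifLocDoublingMeasure.ae_tendsto_average_norm_sub
    volume (hh.locallyIntegrable) 1] with x hx
  set tj : ℕ → ℝ := fun j => ((j : ℝ) + 2)⁻¹ with htj
  have htj_pos : ∀ j, 0 < tj j := by
    intro j; rw [htj]; positivity
  have htj_lt : ∀ j, tj j < 1 := by
    intro j
    rw [htj]
    rw [inv_lt_one_iff₀]
    right; push_cast; linarith [Nat.cast_nonneg (α := ℝ) j]
  have htj_tendsto : Tendsto tj atTop (𝓝[>] 0) := by
    rw [tendsto_nhdsWithin_iff]
    constructor
    · have : Tendsto (fun j : ℕ => (j : ℝ) + 2) atTop atTop :=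
        tendsto_atTop_add_const_right _ 2 tendsto_natCast_atTop_atTop
      exact tendsto_inv_atTop_zero.comp this
    · exact Filter.Eventually.of_forall fun j => htj_pos j
  have hmem : ∀ᶠ j in atTop, x ∈ closedBall x (1 * tj j) :=
    Filter.Eventually.of_forall fun j => by
      simp [mem_closedBall, (htj_pos j).le]
  have havg := hx (fun _ => x) tj htj_tendsto hmem
  set I : ℝ → ℝ := fun t => ∫ y, t ^ (-(n : ℝ)) * ϑ (t⁻¹ • (x - y)) * h y with hI
  have hIt : Tendsto (fun j => I (tj j)) atTop (𝓝 (h x)) := by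
    have hdiff : Tendsto (fun j => I (tj j) - h x) atTop (𝓝 0) := by
      apply squeeze_zero_norm (a := fun j => (volume (ball (0 : Euc n) 1)).toReal *
        ⨍ y in closedBall x (tj j), ‖h y - h x‖)
      · intro j
        rw [Real.norm_eq_abs]
        exact abs_conv_sub_le hn hϑ hh (htj_pos j) x
      · have := havg.const_mul (volume (ball (0 : Euc n) 1)).toReal
        simpa using this
    have := hdiff.add_const (h x)
    simpa using this
  have hcont : Tendsto (fun j => ENNReal.ofReal |I (tj j)|) atTop
      (𝓝 (ENNReal.ofReal |h x|)) := by
    apply (ENNReal.continuous_ofReal.tendsto _).comp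
    exact (continuous_abs.tendsto _).comp hIt
  have hle : ∀ j, ENNReal.ofReal |I (tj j)| ≤ maxFunLoc ϑ h x := by
    intro j
    unfold maxFunLoc
    exact le_iSup_of_le (tj j) (le_iSup_of_le (htj_pos j) (le_iSup_of_le (htj_lt j) le_rfl))
  have := le_of_tendsto hcont (Filter.Eventually.of_forall hle)
  rwa [← Real.enorm_eq_ofReal_abs] at this

end Leb

section Main2

variable {n : ℕ} {ϑ : Euc n → ℝ}

lemma dyadic_exists {t : ℝ} (ht : 0 < t) (ht1 : t < 1) :
    ∃ k : ℕ, ((2:ℝ) ^ (k+1))⁻¹ ≤ t ∧ t ≤ ((2:ℝ) ^ k)⁻¹ := by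
  have hti : 1 < t⁻¹ := (one_lt_inv₀ ht).2 ht1
  refine ⟨⌊Real.logb 2 t⁻¹⌋₊, ?_, ?_⟩
  · have h2 : Real.logb 2 t⁻¹ < ⌊Real.logb 2 t⁻¹⌋₊ + 1 := Nat.lt_floor_add_one _
    have h3 : t⁻¹ ≤ (2:ℝ) ^ (⌊Real.logb 2 t⁻¹⌋₊ + 1) := by
      have h4 := Real.rpow_le_rpow_of_exponent_le (by norm_num : (1:ℝ) ≤ 2) h2.le
      rw [Real.rpow_logb (by norm_num) (by norm_num) (inv_pos.2 ht)] at h4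
      calc t⁻¹ ≤ (2:ℝ) ^ ((⌊Real.logb 2 t⁻¹⌋₊ : ℝ) + 1) := h4
        _ = (2:ℝ) ^ (⌊Real.logb 2 t⁻¹⌋₊ + 1) := by
            rw [← Real.rpow_natCast 2 (⌊Real.logb 2 t⁻¹⌋₊ + 1)]
            push_cast
            ring_nf
    rw [inv_le_comm₀ (by positivity) ht]
    exact h3
  · have h1 : (⌊Real.logb 2 t⁻¹⌋₊ : ℝ) ≤ Real.logb 2 t⁻¹ :=
      Nat.floor_le (Real.logb_nonneg (by norm_num) hti.le)
    have h3 : (2:ℝ) ^ ⌊Real.logb 2 t⁻¹⌋₊ ≤ t⁻¹ := by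
      have h4 := Real.rpow_le_rpow_of_exponent_le (by norm_num : (1:ℝ) ≤ 2) h1
      rw [Real.rpow_logb (by norm_num) (by norm_num) (inv_pos.2 ht),
        Real.rpow_natCast] at h4
      exact h4
    rw [le_inv_comm₀ ht (by positivity)]
    exact h3

end Main2

section Main3

variable {n : ℕ} {ϑ : Euc n → ℝ}

lemma pointwise_est (hn : 1 ≤ n) {γ : ℝ} (hγ0 : 0 < γ) (hϑ : IsHardyTest ϑ)
    {h g : Euc n → ℝ} {Mg Hg : ℝ} (hh : Integrable h volume)
    (hMg : ∀ x, |g x| ≤ Mg) (hHol : ∀ x y, |g x - g y| ≤ Hg * dist x y ^ γ)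
    (hMg0 : 0 ≤ Mg) (hHg0 : 0 ≤ Hg) (hgc : Continuous g) (x : Euc n) :
    maxFunLoc ϑ (fun y => g y * h y) x ≤
      ENNReal.ofReal Mg * maxFunLoc ϑ h x +
      ENNReal.ofReal Hg * ∑' k : ℕ,
        ENNReal.ofReal (((2:ℝ) ^ (k+1)) ^ n * (((2:ℝ) ^ k)⁻¹) ^ γ) *
          ∫⁻ y in ball x (((2:ℝ) ^ k)⁻¹), (‖h y‖₊ : ℝ≥0∞) := by
  unfold maxFunLoc
  refine iSup_le fun t => iSup_le fun ht => iSup_le fun ht1 => ?_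
  simp only []
  have i1 : Integrable (fun y => t ^ (-(n:ℝ)) * ϑ (t⁻¹ • (x - y)) * h y) volume := by
    have := hϑ.ker_mul_integrable hn ht x
      (continuous_const : Continuous fun _ : Euc n => (1:ℝ)) (B := 1)
      (fun y => by norm_num) hh
    simpa using this
  have habs2 : ∀ y, |g y - g x| ≤ Mg + Mg := by
    intro y
    have h1 := hMg y; have h2 := hMg x
    have h3 : |g y - g x| ≤ |g y| + |g x| := by
      calc |g y - g x| = |g y + -(g x)| := by ring_nf
        _ ≤ |g y| + |(-(g x))| := abs_add_le _ _
        _ = |g y| + |g x| := by rw [abs_neg]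
    linarith
  have i2 : Integrable
      (fun y => t ^ (-(n:ℝ)) * ϑ (t⁻¹ • (x - y)) * ((g y - g x) * h y)) volume :=
    hϑ.ker_mul_integrable hn ht x (hgc.sub continuous_const) (B := Mg + Mg) habs2 hh
  have hsplit : (∫ y, t ^ (-(n:ℝ)) * ϑ (t⁻¹ • (x - y)) * (g y * h y))
      = g x * (∫ y, t ^ (-(n:ℝ)) * ϑ (t⁻¹ • (x - y)) * h y)
        + ∫ y, t ^ (-(n:ℝ)) * ϑ (t⁻¹ • (x - y)) * ((g y - g x) * h y) := by
    rw [← integral_const_mul, ← integral_add (i1.const_mul (g x)) i2]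
    congr 1; funext y; ring
  rw [hsplit]
  set A := ∫ y, t ^ (-(n:ℝ)) * ϑ (t⁻¹ • (x - y)) * h y with hA
  set B := ∫ y, t ^ (-(n:ℝ)) * ϑ (t⁻¹ • (x - y)) * ((g y - g x) * h y) with hB
  have hsup : ENNReal.ofReal |A| ≤ maxFunLoc ϑ h x := by
    unfold maxFunLoc
    exact le_iSup_of_le t (le_iSup_of_le ht (le_iSup_of_le ht1 le_rfl))
  have hfirst : ENNReal.ofReal |g x * A| ≤ ENNReal.ofReal Mg * maxFunLoc ϑ h x := by
    calc ENNReal.ofReal |g x * A| ≤ ENNReal.ofReal (Mg * |A|) := by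
          apply ENNReal.ofReal_le_ofReal
          rw [abs_mul]
          exact mul_le_mul_of_nonneg_right (hMg x) (abs_nonneg _)
      _ = ENNReal.ofReal Mg * ENNReal.ofReal |A| := ENNReal.ofReal_mul hMg0
      _ ≤ ENNReal.ofReal Mg * maxFunLoc ϑ h x := mul_le_mul_right hsup _
  have hptw : ∀ y, (‖t ^ (-(n:ℝ)) * ϑ (t⁻¹ • (x - y)) * ((g y - g x) * h y)‖₊ : ℝ≥0∞)
      ≤ (ball x t).indicator
          (fun y => ENNReal.ofReal (t ^ (-(n:ℝ)) * (Hg * t ^ γ)) * (‖h y‖₊ : ℝ≥0∞)) y := by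
    intro y
    by_cases hy : y ∈ ball x t
    · rw [indicator_of_mem hy, ← enorm_eq_nnnorm, Real.enorm_eq_ofReal_abs, ← enorm_eq_nnnorm,
        Real.enorm_eq_ofReal_abs,
        ← ENNReal.ofReal_mul (mul_nonneg (Real.rpow_nonneg ht.le _)
          (mul_nonneg hHg0 (Real.rpow_nonneg ht.le _)))]
      apply ENNReal.ofReal_le_ofReal
      have hd : dist y x < t := mem_ball.1 hy
      have hΔ : |g y - g x| ≤ Hg * t ^ γ := by
        have h5 := hHol y x
        have h2 : dist y x ^ γ ≤ t ^ γ := Real.rpow_le_rpow dist_nonneg hd.le hγ0.le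
        calc |g y - g x| ≤ Hg * dist y x ^ γ := h5
          _ ≤ Hg * t ^ γ := mul_le_mul_of_nonneg_left h2 hHg0
      have h0 : (0:ℝ) ≤ t ^ (-(n:ℝ)) := Real.rpow_nonneg ht.le _
      have hth := hϑ.abs_le_one hn (t⁻¹ • (x - y))
      rw [abs_mul, abs_mul, abs_mul, abs_of_nonneg h0]
      calc t ^ (-(n:ℝ)) * |ϑ (t⁻¹ • (x - y))| * (|g y - g x| * |h y|)
          ≤ t ^ (-(n:ℝ)) * 1 * ((Hg * t ^ γ) * |h y|) := by
            gcongr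
        _ = t ^ (-(n:ℝ)) * (Hg * t ^ γ) * |h y| := by ring
    · rw [indicator_of_notMem hy]
      have hd : t ≤ dist x y := by
        rw [mem_ball, not_lt] at hy; rwa [dist_comm]
      rw [hϑ.scaled_zero ht hd]
      simp
  obtain ⟨k, hk1, hk2⟩ := dyadic_exists ht ht1
  have e1 : t ^ (-(n:ℝ)) ≤ ((2:ℝ)^(k+1))^n := by
    have h4 : t ^ (-(n:ℝ)) ≤ (((2:ℝ)^(k+1))⁻¹) ^ (-(n:ℝ)) :=
      Real.rpow_le_rpow_of_nonpos (by positivity) hk1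
        (neg_nonpos.2 (Nat.cast_nonneg n))
    have hinv : ((((2:ℝ)^(k+1))⁻¹) ^ (-(n:ℝ))) = ((2:ℝ)^(k+1)) ^ (n:ℝ) := by
      rw [Real.inv_rpow (by positivity), Real.rpow_neg (by positivity), inv_inv]
    rw [← Real.rpow_natCast ((2:ℝ)^(k+1)) n, ← hinv]
    exact h4
  have e2 : t ^ γ ≤ (((2:ℝ)^k)⁻¹) ^ γ := Real.rpow_le_rpow ht.le hk2 hγ0.le
  have ecoef : t ^ (-(n:ℝ)) * (Hg * t ^ γ)
      ≤ Hg * (((2:ℝ)^(k+1))^n * (((2:ℝ)^k)⁻¹)^γ) := by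
    have hγn : (0:ℝ) ≤ Hg * t ^ γ := mul_nonneg hHg0 (Real.rpow_nonneg ht.le γ)
    calc t ^ (-(n:ℝ)) * (Hg * t ^ γ)
        ≤ ((2:ℝ)^(k+1))^n * (Hg * (((2:ℝ)^k)⁻¹)^γ) :=
          mul_le_mul e1 (mul_le_mul_of_nonneg_left e2 hHg0) hγn (by positivity)
      _ = Hg * (((2:ℝ)^(k+1))^n * (((2:ℝ)^k)⁻¹)^γ) := by ring
  have hsecond : ENNReal.ofReal |B| ≤ ENNReal.ofReal Hg * ∑' k : ℕ,
      ENNReal.ofReal (((2:ℝ) ^ (k+1)) ^ n * (((2:ℝ) ^ k)⁻¹) ^ γ) *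
        ∫⁻ y in ball x (((2:ℝ) ^ k)⁻¹), (‖h y‖₊ : ℝ≥0∞) := by
    calc ENNReal.ofReal |B| = (‖B‖₊ : ℝ≥0∞) := (Real.enorm_eq_ofReal_abs _).symm
      _ ≤ ∫⁻ y, (‖t ^ (-(n:ℝ)) * ϑ (t⁻¹ • (x - y)) * ((g y - g x) * h y)‖₊ : ℝ≥0∞) :=
          enorm_integral_le_lintegral_enorm _
      _ ≤ ∫⁻ y, (ball x t).indicator
            (fun y => ENNReal.ofReal (t ^ (-(n:ℝ)) * (Hg * t ^ γ)) * (‖h y‖₊ : ℝ≥0∞)) y :=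
          lintegral_mono hptw
      _ = ENNReal.ofReal (t ^ (-(n:ℝ)) * (Hg * t ^ γ)) *
            ∫⁻ y in ball x t, (‖h y‖₊ : ℝ≥0∞) := by
          rw [lintegral_indicator measurableSet_ball,
            lintegral_const_mul' _ _ ENNReal.ofReal_ne_top]
      _ ≤ (ENNReal.ofReal Hg *
            ENNReal.ofReal (((2:ℝ) ^ (k+1)) ^ n * (((2:ℝ) ^ k)⁻¹) ^ γ)) *
            ∫⁻ y in ball x (((2:ℝ) ^ k)⁻¹), (‖h y‖₊ : ℝ≥0∞) := by
          apply mul_le_mul'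
          · rw [← ENNReal.ofReal_mul hHg0]
            exact ENNReal.ofReal_le_ofReal ecoef
          · exact lintegral_mono_set (ball_subset_ball hk2)
      _ ≤ ENNReal.ofReal Hg * ∑' k : ℕ,
            ENNReal.ofReal (((2:ℝ) ^ (k+1)) ^ n * (((2:ℝ) ^ k)⁻¹) ^ γ) *
              ∫⁻ y in ball x (((2:ℝ) ^ k)⁻¹), (‖h y‖₊ : ℝ≥0∞) := by
          rw [mul_assoc]
          exact mul_le_mul_right (ENNReal.le_tsum k) _
  calc ENNReal.ofReal |g x * A + B| ≤ ENNReal.ofReal (|g x * A| + |B|) :=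
        ENNReal.ofReal_le_ofReal (abs_add_le _ _)
    _ ≤ ENNReal.ofReal |g x * A| + ENNReal.ofReal |B| := ENNReal.ofReal_add_le
    _ ≤ _ := add_le_add hfirst hsecond

end Main3

section Main4

variable {n : ℕ}

lemma T_meas {h' : Euc n → ℝ} (hm : Measurable h') (r : ℝ) :
    Measurable (fun x : Euc n => ∫⁻ y in ball x r, (‖h' y‖₊ : ℝ≥0∞)) := by
  have hFmeas : Measurable (fun p : Euc n × Euc n =>
      if dist p.2 p.1 < r then (‖h' p.2‖₊ : ℝ≥0∞) else 0) := by
    apply Measurable.ite ?_ (hm.comp measurable_snd).nnnorm.coe_nnreal_ennreal measurable_const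
    exact measurableSet_lt (measurable_snd.dist measurable_fst) measurable_const
  have hIeq : ∀ x : Euc n, (∫⁻ y in ball x r, (‖h' y‖₊ : ℝ≥0∞))
      = ∫⁻ y, (if dist y x < r then (‖h' y‖₊ : ℝ≥0∞) else 0) := by
    intro x
    rw [← lintegral_indicator measurableSet_ball]
    congr 1
  have heq : (fun x : Euc n => ∫⁻ y in ball x r, (‖h' y‖₊ : ℝ≥0∞))
      = fun x => ∫⁻ y, (if dist y x < r then (‖h' y‖₊ : ℝ≥0∞) else 0) := funext hIeq
  rw [heq]
  exact hFmeas.lintegral_prod_right'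

lemma ball_lintegral_swap {h' : Euc n → ℝ} (hm : Measurable h') {r : ℝ} (hr : 0 < r) :
    (∫⁻ x, ∫⁻ y in ball x r, (‖h' y‖₊ : ℝ≥0∞)) =
      ENNReal.ofReal (r ^ n) * volume (ball (0 : Euc n) 1) * ∫⁻ y, (‖h' y‖₊ : ℝ≥0∞) := by
  have hFmeas : Measurable (fun p : Euc n × Euc n =>
      if dist p.2 p.1 < r then (‖h' p.2‖₊ : ℝ≥0∞) else 0) := by
    apply Measurable.ite ?_ (hm.comp measurable_snd).nnnorm.coe_nnreal_ennreal measurable_const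
    exact measurableSet_lt (measurable_snd.dist measurable_fst) measurable_const
  have hIeq : ∀ x : Euc n, (∫⁻ y in ball x r, (‖h' y‖₊ : ℝ≥0∞))
      = ∫⁻ y, (if dist y x < r then (‖h' y‖₊ : ℝ≥0∞) else 0) := by
    intro x
    rw [← lintegral_indicator measurableSet_ball]
    congr 1
  calc (∫⁻ x, ∫⁻ y in ball x r, (‖h' y‖₊ : ℝ≥0∞))
      = ∫⁻ x, ∫⁻ y, (if dist y x < r then (‖h' y‖₊ : ℝ≥0∞) else 0) := lintegral_congr hIeq
    _ = ∫⁻ y, ∫⁻ x, (if dist y x < r then (‖h' y‖₊ : ℝ≥0∞) else 0) :=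
        lintegral_lintegral_swap hFmeas.aemeasurable
    _ = ∫⁻ y, (‖h' y‖₊ : ℝ≥0∞) * (ENNReal.ofReal (r ^ n) * volume (ball (0 : Euc n) 1)) := by
        apply lintegral_congr
        intro y
        have heq2 : (fun x : Euc n => if dist y x < r then (‖h' y‖₊ : ℝ≥0∞) else 0)
            = (ball y r).indicator (fun _ => (‖h' y‖₊ : ℝ≥0∞)) := by
          funext x
          by_cases hx : x ∈ ball y r
          · rw [Set.indicator_of_mem hx,
              if_pos (show dist y x < r by rw [dist_comm]; exact mem_ball.1 hx)]
          · rw [Set.indicator_of_notMem hx,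
              if_neg (show ¬ dist y x < r by rw [dist_comm]; exact fun hc => hx (mem_ball.2 hc))]
        rw [heq2, lintegral_indicator measurableSet_ball, setLIntegral_const]
        rw [Measure.addHaar_ball_of_pos volume y hr, finrank_euclideanSpace_fin]
    _ = ENNReal.ofReal (r ^ n) * volume (ball (0 : Euc n) 1) * ∫⁻ y, (‖h' y‖₊ : ℝ≥0∞) := by
        rw [lintegral_mul_const'' _ hm.nnnorm.coe_nnreal_ennreal.aemeasurable, mul_comm]

lemma T_lintegral_le {γ : ℝ} (hγ0 : 0 < γ) {h' : Euc n → ℝ} (hm : Measurable h') :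
    (∫⁻ x, ∑' k : ℕ, ENNReal.ofReal (((2:ℝ) ^ (k+1)) ^ n * (((2:ℝ) ^ k)⁻¹) ^ γ) *
        ∫⁻ y in ball x (((2:ℝ) ^ k)⁻¹), (‖h' y‖₊ : ℝ≥0∞)) ≤
      ENNReal.ofReal ((2:ℝ) ^ n * (1 - (2⁻¹:ℝ) ^ γ)⁻¹ *
          (volume (ball (0 : Euc n) 1)).toReal) * ∫⁻ y, (‖h' y‖₊ : ℝ≥0∞) := by
  set q : ℝ := (2⁻¹:ℝ) ^ γ with hq
  have hq0 : 0 ≤ q := Real.rpow_nonneg (by norm_num) _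
  have hq1 : q < 1 := Real.rpow_lt_one (by norm_num) (by norm_num) hγ0
  set V := volume (ball (0 : Euc n) 1) with hV
  set L := ∫⁻ y, (‖h' y‖₊ : ℝ≥0∞) with hL
  have hVtop : V ≠ ⊤ := measure_ball_lt_top.ne
  calc (∫⁻ x, ∑' k : ℕ, ENNReal.ofReal (((2:ℝ) ^ (k+1)) ^ n * (((2:ℝ) ^ k)⁻¹) ^ γ) *
        ∫⁻ y in ball x (((2:ℝ) ^ k)⁻¹), (‖h' y‖₊ : ℝ≥0∞))
      = ∑' k : ℕ, ∫⁻ x, ENNReal.ofReal (((2:ℝ) ^ (k+1)) ^ n * (((2:ℝ) ^ k)⁻¹) ^ γ) *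
        ∫⁻ y in ball x (((2:ℝ) ^ k)⁻¹), (‖h' y‖₊ : ℝ≥0∞) :=
        lintegral_tsum (fun k => ((T_meas hm _).const_mul _).aemeasurable)
    _ = ∑' k : ℕ, ENNReal.ofReal ((2:ℝ) ^ n * q ^ k) * (V * L) := by
        apply tsum_congr
        intro k
        rw [lintegral_const_mul' _ _ ENNReal.ofReal_ne_top,
          ball_lintegral_swap hm (by positivity)]
        have hre : (((2:ℝ) ^ (k+1)) ^ n * (((2:ℝ) ^ k)⁻¹) ^ γ) * (((2:ℝ) ^ k)⁻¹) ^ n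
            = (2:ℝ) ^ n * q ^ k := by
          have hq_eq : (((2:ℝ) ^ k)⁻¹) ^ γ = q ^ k := by
            rw [hq, ← inv_pow, ← Real.rpow_natCast ((2:ℝ)⁻¹) k,
              ← Real.rpow_mul (by norm_num), mul_comm,
              Real.rpow_mul (by norm_num), Real.rpow_natCast]
          have h2k : (2:ℝ) ^ (k+1) * ((2:ℝ) ^ k)⁻¹ = 2 := by
            rw [pow_succ]; field_simp
          rw [hq_eq, mul_right_comm, ← mul_pow, h2k]
        calc ENNReal.ofReal (((2:ℝ) ^ (k+1)) ^ n * (((2:ℝ) ^ k)⁻¹) ^ γ) *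
              (ENNReal.ofReal ((((2:ℝ) ^ k)⁻¹) ^ n) * V * L)
            = (ENNReal.ofReal (((2:ℝ) ^ (k+1)) ^ n * (((2:ℝ) ^ k)⁻¹) ^ γ) *
              ENNReal.ofReal ((((2:ℝ) ^ k)⁻¹) ^ n)) * (V * L) := by ring
          _ = ENNReal.ofReal ((2:ℝ) ^ n * q ^ k) * (V * L) := by
              rw [← ENNReal.ofReal_mul (by positivity), hre]
    _ = (∑' k : ℕ, ENNReal.ofReal ((2:ℝ) ^ n * q ^ k)) * (V * L) := ENNReal.tsum_mul_right
    _ ≤ ENNReal.ofReal ((2:ℝ) ^ n * (1 - q)⁻¹) * (V * L) := by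
        have hsum : (∑' k : ℕ, ENNReal.ofReal ((2:ℝ) ^ n * q ^ k))
            = ENNReal.ofReal ((2:ℝ) ^ n * (1 - q)⁻¹) := by
          rw [← ENNReal.ofReal_tsum_of_nonneg (fun k => by positivity)
            ((summable_geometric_of_lt_one hq0 hq1).mul_left _)]
          congr 1
          rw [tsum_mul_left, tsum_geometric_of_lt_one hq0 hq1]
        rw [hsum]
    _ = ENNReal.ofReal ((2:ℝ) ^ n * (1 - q)⁻¹ * V.toReal) * L := by
        have hnn : (0:ℝ) ≤ (2:ℝ) ^ n * (1 - q)⁻¹ :=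
          mul_nonneg (by positivity) (inv_nonneg.2 (by linarith))
        conv_rhs => rw [ENNReal.ofReal_mul hnn, ENNReal.ofReal_toReal hVtop]
        ring

end Main4

/-- **Multiplication of local Hardy functions by Hölder functions**: for `0 < γ ≤ 1` there
is `C = C(γ,n,ϑ)` with `‖gh‖_{h¹} ≤ C ‖g‖_{C^{0,γ}} ‖h‖_{h¹}` for every `h ∈ h¹(ℝⁿ)` and
every bounded `γ`-Hölder `g` (here `Mg` bounds `sup|g|` and `Hg` the Hölder seminorm, so
`Mg + Hg` bounds `‖g‖_{C^{0,γ}}`). -/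
theorem holder_multiplier_local_hardy (n : ℕ) (hn : 1 ≤ n) (γ : ℝ)
    (hγ0 : 0 < γ) (hγ1 : γ ≤ 1) (ϑ : Euc n → ℝ) (hϑ : IsHardyTest ϑ) :
    ∃ C : ℝ, 0 < C ∧
      ∀ (h g : Euc n → ℝ) (Mg Hg : ℝ),
        Integrable h volume →
        hardyNormLoc ϑ h ≠ ⊤ →
        (∀ x, |g x| ≤ Mg) →
        (∀ x y, |g x - g y| ≤ Hg * dist x y ^ γ) →
        hardyNormLoc ϑ (fun y => g y * h y) ≤
          ENNReal.ofReal (C * (Mg + Hg)) * hardyNormLoc ϑ h := by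
  classical
  set q : ℝ := (2⁻¹:ℝ) ^ γ with hq
  have hq0 : 0 ≤ q := Real.rpow_nonneg (by norm_num) _
  have hq1 : q < 1 := Real.rpow_lt_one (by norm_num) (by norm_num) hγ0
  set D : ℝ := (2:ℝ) ^ n * (1 - q)⁻¹ * (volume (ball (0 : Euc n) 1)).toReal with hD
  have hD0 : 0 ≤ D :=
    mul_nonneg (mul_nonneg (by positivity) (inv_nonneg.2 (by linarith))) ENNReal.toReal_nonneg
  refine ⟨1 + D, by linarith, ?_⟩
  intro h g Mg Hg hh hfin hMg hHol
  have hMg0 : 0 ≤ Mg := le_trans (abs_nonneg _) (hMg 0)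
  have hHg0 : 0 ≤ Hg := by
    set e : Euc n := EuclideanSpace.single (⟨0, hn⟩ : Fin n) (1 : ℝ) with he
    have hne : dist (0 : Euc n) e = 1 := by
      rw [dist_eq_norm, zero_sub, norm_neg]
      simp [he]
    have h1 := hHol 0 e
    rw [hne, Real.one_rpow, mul_one] at h1
    have h2 := abs_nonneg (g 0 - g e)
    linarith
  have hgc : Continuous g := holder_continuous_aux hγ0 hHol
  obtain ⟨h', hm', heq'⟩ : ∃ h'' : Euc n → ℝ, Measurable h'' ∧ h =ᵐ[volume] h'' :=
    ⟨hh.aemeasurable.mk h, hh.aemeasurable.measurable_mk, hh.aemeasurable.ae_eq_mk⟩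
  have hIk_eq : ∀ (x : Euc n) (r : ℝ),
      (∫⁻ y in ball x r, (‖h y‖₊ : ℝ≥0∞)) = ∫⁻ y in ball x r, (‖h' y‖₊ : ℝ≥0∞) :=
    fun x r => lintegral_congr_ae (ae_restrict_of_ae (heq'.mono fun y hy => by simp only [hy]))
  set T : Euc n → ℝ≥0∞ := fun x => ∑' k : ℕ,
      ENNReal.ofReal (((2:ℝ) ^ (k+1)) ^ n * (((2:ℝ) ^ k)⁻¹) ^ γ) *
        ∫⁻ y in ball x (((2:ℝ) ^ k)⁻¹), (‖h' y‖₊ : ℝ≥0∞) with hT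
  have hTmeas : Measurable T :=
    Measurable.ennreal_tsum (fun k => (T_meas hm' _).const_mul _)
  have hpt : ∀ x, maxFunLoc ϑ (fun y => g y * h y) x ≤
      ENNReal.ofReal Mg * maxFunLoc ϑ h x + ENNReal.ofReal Hg * T x := by
    intro x
    have h1 := pointwise_est hn hγ0 hϑ hh hMg hHol hMg0 hHg0 hgc x
    have e2 : (∑' k : ℕ, ENNReal.ofReal (((2:ℝ) ^ (k+1)) ^ n * (((2:ℝ) ^ k)⁻¹) ^ γ) *
        ∫⁻ y in ball x (((2:ℝ) ^ k)⁻¹), (‖h y‖₊ : ℝ≥0∞)) = T x := by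
      rw [hT]
      exact tsum_congr fun k => by rw [hIk_eq]
    rw [e2] at h1
    exact h1
  have hL : (∫⁻ y, (‖h y‖₊ : ℝ≥0∞)) ≤ hardyNormLoc ϑ h := by
    unfold hardyNormLoc
    exact lintegral_mono_ae (enorm_le_maxFunLoc hn hϑ hh)
  have hL' : (∫⁻ y, (‖h' y‖₊ : ℝ≥0∞)) = ∫⁻ y, (‖h y‖₊ : ℝ≥0∞) :=
    (lintegral_congr_ae (heq'.mono fun y hy => by simp only [hy])).symm
  calc hardyNormLoc ϑ (fun y => g y * h y)
      = ∫⁻ x, maxFunLoc ϑ (fun y => g y * h y) x := rfl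
    _ ≤ ∫⁻ x, (ENNReal.ofReal Mg * maxFunLoc ϑ h x + ENNReal.ofReal Hg * T x) :=
        lintegral_mono hpt
    _ = (∫⁻ x, ENNReal.ofReal Mg * maxFunLoc ϑ h x) + ∫⁻ x, ENNReal.ofReal Hg * T x :=
        lintegral_add_right' _ ((hTmeas.const_mul _).aemeasurable)
    _ = ENNReal.ofReal Mg * hardyNormLoc ϑ h + ENNReal.ofReal Hg * ∫⁻ x, T x := by
        rw [lintegral_const_mul' _ _ ENNReal.ofReal_ne_top,
          lintegral_const_mul' _ _ ENNReal.ofReal_ne_top]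
        rfl
    _ ≤ ENNReal.ofReal Mg * hardyNormLoc ϑ h +
          ENNReal.ofReal Hg * (ENNReal.ofReal D * hardyNormLoc ϑ h) := by
        gcongr
        calc (∫⁻ x, T x) ≤ ENNReal.ofReal D * ∫⁻ y, (‖h' y‖₊ : ℝ≥0∞) := by
              rw [hT, hD, hq]
              exact T_lintegral_le hγ0 hm'
          _ = ENNReal.ofReal D * ∫⁻ y, (‖h y‖₊ : ℝ≥0∞) := by rw [hL']
          _ ≤ ENNReal.ofReal D * hardyNormLoc ϑ h := mul_le_mul_right hL _
    _ ≤ ENNReal.ofReal ((1 + D) * (Mg + Hg)) * hardyNormLoc ϑ h := by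
        have e3 : ENNReal.ofReal Mg * hardyNormLoc ϑ h +
              ENNReal.ofReal Hg * (ENNReal.ofReal D * hardyNormLoc ϑ h)
            = (ENNReal.ofReal Mg + ENNReal.ofReal (Hg * D)) * hardyNormLoc ϑ h := by
          rw [ENNReal.ofReal_mul hHg0]
          ring
        rw [e3]
        apply mul_le_mul_left
        calc ENNReal.ofReal Mg + ENNReal.ofReal (Hg * D)
            = ENNReal.ofReal (Mg + Hg * D) :=
              (ENNReal.ofReal_add hMg0 (mul_nonneg hHg0 hD0)).symm
          _ ≤ ENNReal.ofReal ((1 + D) * (Mg + Hg)) :=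
              ENNReal.ofReal_le_ofReal (by nlinarith)

end
end

section
/- (Far-field Riesz potential estimate on Morrey functions.) Let n ≥ 1, 0 ≤ β < n, 1 ≤ p < ∞, 0 < αp < n−β, and let a be a Riesz-type kernel of order α with C¹-sphere bound K. Then there exists C = C(n,α,β,p,K) such that: for every g ∈ M^{p,β}(ℝⁿ) vanishing almost everywhere on B_{2r}(x₀) (some x₀ ∈ ℝⁿ, r > 0), and every z ∈ B_r(x₀), the integral ∫_{ℝⁿ} |a(z−y)| |g(y)| dy is finite and bounded by C ‖g‖_{M^{p,β}(ℝⁿ)} r^{α − (n−β)/p}. -/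
open MeasureTheory Metric Filter Set
open scoped ENNReal Topology NNReal

noncomputable section

/-- `a : ℝⁿ∖{0} → ℝ` is a Riesz-type kernel of order `α` with `C¹`-sphere bound `K`:
`a` is positively homogeneous of degree `α - n`, is `C¹` away from the origin, and its
restriction to the unit sphere is bounded in `C¹` by `K`. -/
def IsRieszKernel (n : ℕ) (α K : ℝ) (a : Euc n → ℝ) : Prop :=
  (∀ c : ℝ, 0 < c → ∀ x : Euc n, x ≠ 0 → a (c • x) = c ^ (α - (n : ℝ)) * a x) ∧
  ContDiffOn ℝ 1 a {(0 : Euc n)}ᶜ ∧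
  ∀ x : Euc n, ‖x‖ = 1 → |a x| + ‖fderiv ℝ a x‖ ≤ K

/-- The Riesz potential `A_α[g](x) = ∫ a(x-y) g(y) dy` (Bochner integral; `0` where the
integral does not converge). -/
def rieszPot {n : ℕ} (a g : Euc n → ℝ) (x : Euc n) : ℝ :=
  ∫ y, a (x - y) * g y

lemma rpow_collect (r u v : ℝ) (hr : 0 < r) (k : ℕ) :
    ((2:ℝ) ^ k * r) ^ u * ((2:ℝ) ^ (k+2) * r) ^ v
      = (2:ℝ) ^ (2*v) * r ^ (u+v) * ((2:ℝ) ^ (u+v)) ^ k := by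
  have h2 : (0:ℝ) < 2 := two_pos
  have e1 : ((2:ℝ) ^ k * r) ^ u = (2:ℝ) ^ ((k:ℝ)*u) * r ^ u := by
    rw [← Real.rpow_natCast (2:ℝ) k, Real.mul_rpow (Real.rpow_nonneg h2.le _) hr.le,
      ← Real.rpow_mul h2.le]
  have e2 : ((2:ℝ) ^ (k+2) * r) ^ v = (2:ℝ) ^ (((k:ℝ)+2)*v) * r ^ v := by
    rw [← Real.rpow_natCast (2:ℝ) (k+2), Real.mul_rpow (Real.rpow_nonneg h2.le _) hr.le,
      ← Real.rpow_mul h2.le]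
    push_cast
    ring_nf
  rw [e1, e2, mul_mul_mul_comm, ← Real.rpow_add h2, ← Real.rpow_add hr,
    ← Real.rpow_natCast ((2:ℝ) ^ (u+v)) k, ← Real.rpow_mul h2.le, mul_right_comm,
    ← Real.rpow_add h2]
  congr 2
  ring

lemma holder_step {X : Type*} [MeasurableSpace X] (μ : Measure X) (g : X → ℝ)
    (hg : Measurable g) (p : ℝ) (hp : 1 ≤ p) (s : Set X) :
    ∫⁻ y in s, ENNReal.ofReal |g y| ∂μ ≤
      (∫⁻ y in s, ENNReal.ofReal |g y| ^ p ∂μ) ^ (1/p) * (μ s) ^ (1 - 1/p) := by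
  rcases eq_or_lt_of_le hp with h1 | h1
  · rw [← h1]
    simp
  · have hp1 : p - 1 ≠ 0 := by intro h; rw [sub_eq_zero] at h; exact h1.ne h.symm
    have hpq : p.HolderConjugate (p/(p-1)) := Real.HolderConjugate.conjExponent h1
    have hmeas : AEMeasurable (fun y => ENNReal.ofReal |g y|) (μ.restrict s) :=
      (ENNReal.measurable_ofReal.comp hg.abs).aemeasurable
    have := ENNReal.lintegral_mul_le_Lp_mul_Lq (μ.restrict s) hpq hmeas aemeasurable_const
      (g := fun _ => (1:ℝ≥0∞))
    simp only [mul_one, Pi.mul_apply, ENNReal.one_rpow, lintegral_one,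
      Measure.restrict_apply_univ] at this
    have hq : 1/(p/(p-1)) = 1 - 1/p := by field_simp
    rwa [hq] at this

lemma kernel_bound {n : ℕ} {α K : ℝ} {a : Euc n → ℝ} (ha : IsRieszKernel n α K a)
    (x : Euc n) (hx : x ≠ 0) : |a x| ≤ K * ‖x‖ ^ (α - (n:ℝ)) := by
  have hc : 0 < ‖x‖ := norm_pos_iff.2 hx
  set u : Euc n := ‖x‖⁻¹ • x with hu_def
  have hu : ‖u‖ = 1 := by
    rw [hu_def, norm_smul, norm_inv, norm_norm, inv_mul_cancel₀ hc.ne']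
  have hu0 : u ≠ 0 := by
    intro h; rw [h, norm_zero] at hu; exact one_ne_zero hu.symm
  have hx' : ‖x‖ • u = x := by
    rw [hu_def, smul_smul, mul_inv_cancel₀ hc.ne', one_smul]
  have haK : |a u| ≤ K := le_trans (le_add_of_nonneg_right (norm_nonneg _)) (ha.2.2 u hu)
  calc |a x| = |a (‖x‖ • u)| := by rw [hx']
    _ = ‖x‖ ^ (α - (n:ℝ)) * |a u| := by
        rw [ha.1 ‖x‖ hc u hu0, abs_mul, abs_of_pos (Real.rpow_pos_of_pos hc _)]
    _ ≤ ‖x‖ ^ (α - (n:ℝ)) * K := by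
        exact mul_le_mul_of_nonneg_left haK (Real.rpow_nonneg hc.le _)
    _ = K * ‖x‖ ^ (α - (n:ℝ)) := mul_comm _ _

set_option maxHeartbeats 2000000 in
/-- **Far-field Riesz potential estimate on Morrey functions**: if `g ∈ M^{p,β}(ℝⁿ)`
vanishes a.e. on `B_{2r}(x₀)` then for every `z ∈ B_r(x₀)`,
`∫ |a(z-y)| |g(y)| dy ≤ C ‖g‖_{M^{p,β}} r^{α - (n-β)/p}`. -/
theorem far_field_riesz_estimate (n : ℕ) (hn : 1 ≤ n) (α β p K : ℝ)
    (hβ0 : 0 ≤ β) (hβn : β < n) (hp : 1 ≤ p) (hα : 0 < α * p) (hαp : α * p < (n : ℝ) - β)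
    (a : Euc n → ℝ) (ha : IsRieszKernel n α K a) :
    ∃ C : ℝ, 0 < C ∧
      ∀ (g : Euc n → ℝ) (x₀ : Euc n) (r : ℝ), 0 < r →
        Measurable g →
        morreySup p β Set.univ (fun y => |g y|) ≠ ⊤ →
        (∀ᵐ y, y ∈ Metric.ball x₀ (2 * r) → g y = 0) →
        ∀ z ∈ Metric.ball x₀ r,
          (∫⁻ y, ENNReal.ofReal |a (z - y)| * ENNReal.ofReal |g y|) ≤
            ENNReal.ofReal
              (C * ((morreySup p β Set.univ (fun y => |g y|)) ^ (1 / p)).toReal *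
                r ^ (α - ((n : ℝ) - β) / p)) := by
  classical
  -- basic numerics
  have hp0 : (0:ℝ) < p := lt_of_lt_of_le one_pos hp
  have hα0 : 0 < α := by nlinarith
  have hαn : α - (n:ℝ) < 0 := by nlinarith
  set γ : ℝ := α - ((n:ℝ) - β) / p with hγ_def
  have hγ : γ < 0 := by
    rw [hγ_def, sub_neg]
    rw [lt_div_iff₀ hp0]
    nlinarith
  set v : ℝ := β/p + (n:ℝ)*(1-1/p) with hv_def
  have huv : α - (n:ℝ) + v = γ := by
    rw [hv_def, hγ_def]; field_simp; ring
  -- nontriviality & volume of unit ball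
  haveI : Nontrivial (Euc n) := by
    refine ⟨EuclideanSpace.single (⟨0, hn⟩ : Fin n) (1:ℝ), 0, fun h => ?_⟩
    have := EuclideanSpace.norm_single (𝕜 := ℝ) (⟨0, hn⟩ : Fin n) (1:ℝ)
    rw [h, norm_zero] at this
    simp at this
  set cvol : ℝ≥0∞ := volume (ball (0 : Euc n) 1) with hcvol_def
  have hcvol_pos : 0 < cvol := measure_ball_pos volume 0 one_pos
  have hcvol_top : cvol ≠ ⊤ := measure_ball_lt_top.ne
  have hcvolR : 0 < cvol.toReal := ENNReal.toReal_pos hcvol_pos.ne' hcvol_top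
  -- K ≥ 0
  have hK0 : 0 ≤ K := by
    have h1 := ha.2.2 (EuclideanSpace.single (⟨0, hn⟩ : Fin n) (1:ℝ))
      (by rw [EuclideanSpace.norm_single]; norm_num)
    have := abs_nonneg (a (EuclideanSpace.single (⟨0, hn⟩ : Fin n) (1:ℝ)))
    have := norm_nonneg (fderiv ℝ a (EuclideanSpace.single (⟨0, hn⟩ : Fin n) (1:ℝ)))
    linarith
  -- geometric ratio
  set q : ℝ := (2:ℝ) ^ γ with hq_def
  have hq_pos : 0 < q := Real.rpow_pos_of_pos two_pos _
  have hq_lt : q < 1 := Real.rpow_lt_one_of_one_lt_of_neg one_lt_two hγ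
  -- the constant
  set C₀ : ℝ := K * (2:ℝ) ^ (2*v) * cvol.toReal ^ (1 - 1/p) * (1 - q)⁻¹ with hC₀_def
  have hC₀0 : 0 ≤ C₀ := by
    apply mul_nonneg
    apply mul_nonneg
    apply mul_nonneg hK0 (Real.rpow_nonneg two_pos.le _)
    exact Real.rpow_nonneg hcvolR.le _
    rw [inv_nonneg]; linarith
  refine ⟨C₀ + 1, by linarith, ?_⟩
  intro g x₀ r hr hg hM hg0 z hz
  have h1p0 : 0 ≤ 1 - 1/p := by
    rw [sub_nonneg, div_le_one hp0]; exact hp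
  have h1pp : (0:ℝ) ≤ 1/p := by positivity
  set M : ℝ≥0∞ := morreySup p β Set.univ (fun y => |g y|) with hM_def
  set m : ℝ := (M ^ (1/p)).toReal with hm_def
  have hm0 : 0 ≤ m := ENNReal.toReal_nonneg
  have hMp_top : M ^ (1/p) ≠ ⊤ :=
    ENNReal.rpow_ne_top_of_nonneg (by positivity) hM
  -- Morrey bound
  have morrey_bound : ∀ R : ℝ, 0 < R →
      ∫⁻ y in ball x₀ R, ENNReal.ofReal (|g y| ^ p) ≤ ENNReal.ofReal (R ^ β) * M := by
    intro R hR
    have h1 : ENNReal.ofReal (R ^ (-β)) *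
        ∫⁻ y in ball x₀ R ∩ Set.univ, ENNReal.ofReal (|g y| ^ p) ≤ M := by
      rw [hM_def, morreySup]
      exact le_iSup_of_le x₀ <| le_iSup_of_le (Set.mem_univ x₀) <|
        le_iSup_of_le R <| le_iSup_of_le hR le_rfl
    rw [Set.inter_univ] at h1
    have h2 := mul_le_mul_right h1 (ENNReal.ofReal (R ^ β))
    rwa [← mul_assoc, ← ENNReal.ofReal_mul (Real.rpow_nonneg hR.le _),
      ← Real.rpow_add hR, add_neg_cancel, Real.rpow_zero, ENNReal.ofReal_one, one_mul] at h2
  -- reduce to complement of the ball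
  have hstep1 : (∫⁻ y, ENNReal.ofReal |a (z - y)| * ENNReal.ofReal |g y|) =
      ∫⁻ y in (ball x₀ (2*r))ᶜ, ENNReal.ofReal |a (z - y)| * ENNReal.ofReal |g y| := by
    rw [← lintegral_indicator measurableSet_ball.compl]
    apply lintegral_congr_ae
    filter_upwards [hg0] with y hy
    by_cases h : y ∈ ball x₀ (2*r)
    · rw [Set.indicator_of_notMem (by simpa using h), hy h]
      simp
    · rw [Set.indicator_of_mem (by simpa using h)]
  -- dyadic annuli
  set ann : ℕ → Set (Euc n) := fun k => ball x₀ ((2:ℝ)^(k+2) * r) \ ball x₀ ((2:ℝ)^(k+1) * r)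
    with hann_def
  have cover : (ball x₀ (2*r))ᶜ ⊆ ⋃ k : ℕ, ann k := by
    intro y hy
    simp only [Set.mem_compl_iff, mem_ball, not_lt] at hy
    have hP : ∃ m : ℕ, dist y x₀ < 2^m * r := by
      obtain ⟨m, hm⟩ := pow_unbounded_of_one_lt (dist y x₀ / r) one_lt_two
      exact ⟨m, by rwa [div_lt_iff₀ hr] at hm⟩
    set m₀ := Nat.find hP with hm₀_def
    have hm₀ : dist y x₀ < 2^m₀ * r := Nat.find_spec hP
    have h2le : 2 ≤ m₀ := by
      by_contra h
      push_neg at h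
      have h1 : m₀ ≤ 1 := by omega
      have : (2:ℝ)^m₀ ≤ 2^1 := pow_le_pow_right₀ one_le_two h1
      have : (2:ℝ)^m₀ * r ≤ 2 * r := by
        nlinarith
      linarith
    refine Set.mem_iUnion.2 ⟨m₀ - 2, ?_, ?_⟩
    · rw [mem_ball]
      have : m₀ - 2 + 2 = m₀ := by omega
      rw [this]
      exact hm₀
    · rw [mem_ball, not_lt]
      have := Nat.find_min hP (show m₀ - 2 + 1 < m₀ by omega)
      exact le_of_not_gt this
  -- per-annulus estimate
  have hann_est : ∀ k : ℕ,
      (∫⁻ y in ann k, ENNReal.ofReal |a (z - y)| * ENNReal.ofReal |g y|) ≤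
        (ENNReal.ofReal (K * (2:ℝ)^(2*v) * r ^ γ) * (M ^ (1/p) * cvol ^ (1-1/p))) *
          (ENNReal.ofReal q) ^ k := by
    intro k
    set R : ℝ := (2:ℝ)^(k+2) * r with hR_def
    have hR : 0 < R := by positivity
    have hRk : (0:ℝ) < (2:ℝ)^k * r := by positivity
    -- kernel bound on the annulus
    have hker : ∀ y ∈ ann k, ENNReal.ofReal |a (z - y)| ≤
        ENNReal.ofReal (K * ((2:ℝ)^k * r) ^ (α - (n:ℝ))) := by
      intro y hy
      apply ENNReal.ofReal_le_ofReal
      have hyd : (2:ℝ)^(k+1) * r ≤ dist y x₀ := by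
        have := hy.2
        rw [mem_ball, not_lt] at this
        exact this
      have hzx : dist z x₀ < r := mem_ball.1 hz
      have htri : dist y x₀ ≤ dist y z + dist z x₀ := dist_triangle y z x₀
      have h2k : (2:ℝ)^k * r ≤ dist y z := by
        have h1 : (2:ℝ)^(k+1) = 2 * 2^k := by ring
        have h2 : (1:ℝ) ≤ 2^k := one_le_pow₀ one_le_two
        nlinarith
      have hzy : ‖z - y‖ = dist y z := by rw [dist_comm, dist_eq_norm]
      have hzy0 : z - y ≠ 0 := by
        intro h
        rw [h, norm_zero] at hzy
        nlinarith
      calc |a (z - y)| ≤ K * ‖z - y‖ ^ (α - (n:ℝ)) := kernel_bound ha _ hzy0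
        _ ≤ K * ((2:ℝ)^k * r) ^ (α - (n:ℝ)) := by
            apply mul_le_mul_of_nonneg_left _ hK0
            apply Real.rpow_le_rpow_of_nonpos hRk _ hαn.le
            rw [hzy]; exact h2k
    calc (∫⁻ y in ann k, ENNReal.ofReal |a (z - y)| * ENNReal.ofReal |g y|)
        ≤ ∫⁻ y in ann k, ENNReal.ofReal (K * ((2:ℝ)^k * r) ^ (α - (n:ℝ))) *
            ENNReal.ofReal |g y| := by
          apply setLIntegral_mono ((ENNReal.measurable_ofReal.comp hg.abs).const_mul _)
          intro y hy
          exact mul_le_mul_left (hker y hy) _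
      _ = ENNReal.ofReal (K * ((2:ℝ)^k * r) ^ (α - (n:ℝ))) *
            ∫⁻ y in ann k, ENNReal.ofReal |g y| := lintegral_const_mul' _ _ ENNReal.ofReal_ne_top
      _ ≤ ENNReal.ofReal (K * ((2:ℝ)^k * r) ^ (α - (n:ℝ))) *
            ((∫⁻ y in ann k, ENNReal.ofReal |g y| ^ p) ^ (1/p) * (volume (ann k)) ^ (1 - 1/p)) := by
          exact mul_le_mul_right (holder_step volume g hg p hp _) _
      _ ≤ ENNReal.ofReal (K * ((2:ℝ)^k * r) ^ (α - (n:ℝ))) *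
            ((ENNReal.ofReal (R ^ β) * M) ^ (1/p) *
              (ENNReal.ofReal (R ^ (n:ℕ)) * cvol) ^ (1 - 1/p)) := by
          apply mul_le_mul_right
          apply mul_le_mul'
          · apply ENNReal.rpow_le_rpow _ (by positivity)
            have heq : ∀ y : Euc n, ENNReal.ofReal |g y| ^ p = ENNReal.ofReal (|g y| ^ p) :=
              fun y => ENNReal.ofReal_rpow_of_nonneg (abs_nonneg _) hp0.le
            calc (∫⁻ y in ann k, ENNReal.ofReal |g y| ^ p)
                = ∫⁻ y in ann k, ENNReal.ofReal (|g y| ^ p) := by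
                  exact lintegral_congr fun y => heq y
              _ ≤ ∫⁻ y in ball x₀ R, ENNReal.ofReal (|g y| ^ p) :=
                  lintegral_mono_set Set.diff_subset
              _ ≤ ENNReal.ofReal (R ^ β) * M := morrey_bound R hR
          · apply ENNReal.rpow_le_rpow _ h1p0
            calc volume (ann k) ≤ volume (ball x₀ R) := measure_mono Set.diff_subset
              _ = ENNReal.ofReal (R ^ (n:ℕ)) * cvol := by
                  rw [Measure.addHaar_ball volume x₀ hR.le, finrank_euclideanSpace_fin]
      _ = (ENNReal.ofReal (K * (2:ℝ)^(2*v) * r ^ γ) * (M ^ (1/p) * cvol ^ (1-1/p))) *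
            (ENNReal.ofReal q) ^ k := by
          rw [ENNReal.mul_rpow_of_nonneg _ _ h1pp,
            ENNReal.mul_rpow_of_nonneg _ _ h1p0,
            ENNReal.ofReal_rpow_of_pos (Real.rpow_pos_of_pos hR _),
            ENNReal.ofReal_rpow_of_pos (pow_pos hR _)]
          have e3 : (R^β)^(1/p) * ((R^(n:ℕ)):ℝ)^(1-1/p) = R ^ v := by
            rw [← Real.rpow_natCast R n, ← Real.rpow_mul hR.le, ← Real.rpow_mul hR.le,
              ← Real.rpow_add hR]
            congr 1
            rw [hv_def]
            ring
          have key : ENNReal.ofReal (K * ((2:ℝ)^k * r) ^ (α-(n:ℝ))) *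
              ENNReal.ofReal ((R^β)^(1/p)) * ENNReal.ofReal (((R^(n:ℕ)):ℝ)^(1-1/p))
              = ENNReal.ofReal (K * (2:ℝ)^(2*v) * r^γ) * (ENNReal.ofReal q)^k := by
            rw [← ENNReal.ofReal_mul (by positivity), ← ENNReal.ofReal_mul (by positivity),
              ← ENNReal.ofReal_pow hq_pos.le, ← ENNReal.ofReal_mul (by positivity)]
            congr 1
            calc K * ((2:ℝ)^k * r) ^ (α-(n:ℝ)) * (R^β)^(1/p) * ((R^(n:ℕ)):ℝ)^(1-1/p)
                = K * (((2:ℝ)^k * r) ^ (α-(n:ℝ)) * ((R^β)^(1/p) * ((R^(n:ℕ)):ℝ)^(1-1/p))) := by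
                  ring
              _ = K * (((2:ℝ)^k * r) ^ (α-(n:ℝ)) * R ^ v) := by rw [e3]
              _ = K * ((2:ℝ)^(2*v) * r^(α-(n:ℝ)+v) * ((2:ℝ)^(α-(n:ℝ)+v))^k) := by
                  rw [hR_def, rpow_collect r (α-(n:ℝ)) v hr k]
              _ = K * (2:ℝ)^(2*v) * r^γ * q^k := by rw [huv, hq_def]; ring
          calc ENNReal.ofReal (K * ((2:ℝ)^k * r) ^ (α - (n:ℝ))) *
                (ENNReal.ofReal ((R ^ β)^(1/p)) * M ^ (1/p) *
                  (ENNReal.ofReal ((R ^ (n:ℕ))^(1-1/p)) * cvol ^ (1-1/p)))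
              = (ENNReal.ofReal (K * ((2:ℝ)^k * r) ^ (α-(n:ℝ))) *
                  ENNReal.ofReal ((R^β)^(1/p)) * ENNReal.ofReal (((R^(n:ℕ)):ℝ)^(1-1/p))) *
                (M ^ (1/p) * cvol ^ (1-1/p)) := by ring
            _ = (ENNReal.ofReal (K * (2:ℝ)^(2*v) * r^γ) * (ENNReal.ofReal q)^k) *
                (M ^ (1/p) * cvol ^ (1-1/p)) := by rw [key]
            _ = (ENNReal.ofReal (K * (2:ℝ)^(2*v) * r ^ γ) * (M ^ (1/p) * cvol ^ (1-1/p))) *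
                (ENNReal.ofReal q) ^ k := by ring
  -- sum up
  set B : ℝ≥0∞ := ENNReal.ofReal (K * (2:ℝ)^(2*v) * r ^ γ) * (M ^ (1/p) * cvol ^ (1-1/p))
    with hB_def
  have h1q : (1:ℝ≥0∞) - ENNReal.ofReal q = ENNReal.ofReal (1 - q) := by
    rw [ENNReal.ofReal_sub 1 hq_pos.le, ENNReal.ofReal_one]
  have hEtop : B * (1 - ENNReal.ofReal q)⁻¹ ≠ ⊤ := by
    apply ENNReal.mul_ne_top
    · exact ENNReal.mul_ne_top ENNReal.ofReal_ne_top
        (ENNReal.mul_ne_top hMp_top (ENNReal.rpow_ne_top_of_nonneg h1p0 hcvol_top))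
    · rw [ENNReal.inv_ne_top, h1q]
      exact (ENNReal.ofReal_pos.2 (by linarith)).ne'
  have hmain : (∫⁻ y, ENNReal.ofReal |a (z - y)| * ENNReal.ofReal |g y|) ≤
      B * (1 - ENNReal.ofReal q)⁻¹ := by
    rw [hstep1]
    calc (∫⁻ y in (ball x₀ (2*r))ᶜ, ENNReal.ofReal |a (z - y)| * ENNReal.ofReal |g y|)
        ≤ ∫⁻ y in ⋃ k : ℕ, ann k, ENNReal.ofReal |a (z - y)| * ENNReal.ofReal |g y| :=
          lintegral_mono_set cover
      _ ≤ ∑' k : ℕ, ∫⁻ y in ann k, ENNReal.ofReal |a (z - y)| * ENNReal.ofReal |g y| :=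
          lintegral_iUnion_le _ _
      _ ≤ ∑' k : ℕ, B * (ENNReal.ofReal q) ^ k := ENNReal.tsum_le_tsum hann_est
      _ = B * ∑' k : ℕ, (ENNReal.ofReal q) ^ k := ENNReal.tsum_mul_left
      _ = B * (1 - ENNReal.ofReal q)⁻¹ := by rw [ENNReal.tsum_geometric]
  refine le_trans hmain ?_
  rw [ENNReal.le_ofReal_iff_toReal_le hEtop
    (mul_nonneg (mul_nonneg (by linarith) hm0) (Real.rpow_nonneg hr.le _))]
  have htoR : (B * (1 - ENNReal.ofReal q)⁻¹).toReal =
      (K * (2:ℝ)^(2*v) * r ^ γ) * (m * cvol.toReal ^ (1-1/p)) * (1-q)⁻¹ := by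
    rw [h1q, hB_def, ENNReal.toReal_mul, ENNReal.toReal_mul, ENNReal.toReal_mul,
      ENNReal.toReal_inv,
      ENNReal.toReal_ofReal (mul_nonneg (mul_nonneg hK0 (Real.rpow_nonneg two_pos.le _))
        (Real.rpow_nonneg hr.le _)),
      ENNReal.toReal_ofReal (by linarith), ← hm_def, ← ENNReal.toReal_rpow]
  rw [htoR]
  have hrg : (0:ℝ) ≤ r ^ γ := Real.rpow_nonneg hr.le _
  have hEq : (K * (2:ℝ)^(2*v) * r ^ γ) * (m * cvol.toReal ^ (1-1/p)) * (1-q)⁻¹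
      = C₀ * m * r ^ γ := by
    rw [hC₀_def]; ring
  rw [hEq]
  nlinarith [mul_nonneg hm0 hrg]

end
end

section
/- (Weak Morrey spaces embed into smaller strong Morrey spaces.) Let n ≥ 1, E ⊆ ℝⁿ a measurable set, 1 < q < ∞, 0 ≤ β < n, and θ with 1/q ≤ θ < 1. Then there exists C = C(n,q,θ) such that every measurable g on E with ‖g‖_{M^{(q,∞),β}(E)} < ∞ satisfies ‖g‖_{M^{θq, n−θ(n−β)}(E)} ≤ C ‖g‖_{M^{(q,∞),β}(E)}; that is, sup_{x∈E, r>0} r^{−(n−θ(n−β))} ∫_{B_r(x)∩E} |g|^{θq} ≤ C^{θq} ‖g‖_{M^{(q,∞),β}(E)}^{θq}. -/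
open MeasureTheory Metric Filter Set
open scoped ENNReal Topology NNReal

noncomputable section

/-- The weak-Morrey quasinorm `‖g‖_{M^{(q,∞),β}(E)}
 = sup_{x ∈ E, r > 0} r^{-β/q} sup_{s>0} s |{y ∈ B_r(x) ∩ E : |g|(y) > s}|^{1/q}`,
for a function with pointwise magnitude `ρ`. -/
def wMorreySup {n : ℕ} (q β : ℝ) (E : Set (Euc n)) (ρ : Euc n → ℝ) : ℝ≥0∞ :=
  ⨆ (x : Euc n) (_ : x ∈ E) (r : ℝ) (_ : 0 < r),
    ENNReal.ofReal (r ^ (-β / q)) *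
      ⨆ (s : ℝ) (_ : 0 < s),
        ENNReal.ofReal s * (volume {y ∈ Metric.ball x r ∩ E | s < ρ y}) ^ (1 / q)

/-- Layer-cake formula for `p`-th powers, `p ≥ 1`. -/
lemma layercake_rpow {α : Type*} [MeasurableSpace α] (μ : Measure α) (f : α → ℝ)
    (hf : Measurable f) (hfnn : ∀ a, 0 ≤ f a) {p : ℝ} (hp : 1 ≤ p) :
    ∫⁻ ω, ENNReal.ofReal (f ω ^ p) ∂μ =
      ENNReal.ofReal p * ∫⁻ t in Set.Ioi (0:ℝ), μ {a | t < f a} * ENNReal.ofReal (t ^ (p - 1)) := by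
  have hp0 : 0 < p := lt_of_lt_of_le one_pos hp
  have g_intble : ∀ t > (0:ℝ), IntervalIntegrable (fun s : ℝ => s ^ (p - 1)) volume 0 t :=
    fun t _ => intervalIntegral.intervalIntegrable_rpow' (by linarith)
  have g_nn : ∀ᵐ t ∂volume.restrict (Set.Ioi (0:ℝ)), 0 ≤ t ^ (p - 1) := by
    filter_upwards [ae_restrict_mem measurableSet_Ioi] with t ht
    exact Real.rpow_nonneg ht.le _
  have key := lintegral_comp_eq_lintegral_meas_lt_mul μ (ae_of_all _ hfnn)
    hf.aemeasurable g_intble g_nn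
  calc ∫⁻ ω, ENNReal.ofReal (f ω ^ p) ∂μ
      = ∫⁻ ω, ENNReal.ofReal p * ENNReal.ofReal (∫ t in (0:ℝ)..f ω, t ^ (p - 1)) ∂μ := by
        refine lintegral_congr fun ω => ?_
        rw [integral_rpow (Or.inl (by linarith)), show p - 1 + 1 = p from by ring,
          Real.zero_rpow hp0.ne', sub_zero, ← ENNReal.ofReal_mul hp0.le]
        congr 1
        field_simp
    _ = ENNReal.ofReal p * ∫⁻ ω, ENNReal.ofReal (∫ t in (0:ℝ)..f ω, t ^ (p - 1)) ∂μ :=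
        lintegral_const_mul' _ _ ENNReal.ofReal_ne_top
    _ = _ := by rw [key]

/-- Extracting a distribution-function bound from the weak-norm bound. -/
lemma dist_aux {μ : ℝ≥0∞} {w r t b q : ℝ} (hq : 0 < q) (hr : 0 < r) (ht : 0 < t) (hw : 0 < w)
    (hμ : μ ≠ ⊤)
    (h : ENNReal.ofReal (r ^ (-b / q)) * (ENNReal.ofReal t * μ ^ (1 / q)) ≤ ENNReal.ofReal w) :
    μ ≤ ENNReal.ofReal (w ^ q * r ^ b * t ^ (-q)) := by
  have hμq : μ ^ (1 / q) ≠ ⊤ := ENNReal.rpow_ne_top_of_nonneg (by positivity) hμ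
  have h2 := ENNReal.rpow_le_rpow h hq.le
  rw [ENNReal.mul_rpow_of_ne_top ENNReal.ofReal_ne_top
        (ENNReal.mul_ne_top ENNReal.ofReal_ne_top hμq),
      ENNReal.mul_rpow_of_ne_top ENNReal.ofReal_ne_top hμq,
      ← ENNReal.rpow_mul, one_div_mul_cancel hq.ne', ENNReal.rpow_one,
      ENNReal.ofReal_rpow_of_pos (Real.rpow_pos_of_pos hr (-b / q)),
      ENNReal.ofReal_rpow_of_pos ht, ENNReal.ofReal_rpow_of_pos hw,
      ← Real.rpow_mul hr.le, div_mul_cancel₀ _ hq.ne'] at h2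
  have hreal : (r ^ b * t ^ (-q)) * ((r:ℝ) ^ (-b) * t ^ q) = 1 := by
    rw [show (r ^ b * t ^ (-q)) * ((r:ℝ) ^ (-b) * t ^ q)
        = (r ^ b * r ^ (-b)) * (t ^ (-q) * t ^ q) from by ring,
      ← Real.rpow_add hr, ← Real.rpow_add ht]
    simp
  have hcancel : ENNReal.ofReal (r ^ b * t ^ (-q)) *
      (ENNReal.ofReal (r ^ (-b)) * ENNReal.ofReal (t ^ q)) = 1 := by
    rw [← ENNReal.ofReal_mul (Real.rpow_nonneg hr.le _),
      ← ENNReal.ofReal_mul (mul_nonneg (Real.rpow_nonneg hr.le _) (Real.rpow_nonneg ht.le _)),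
      hreal, ENNReal.ofReal_one]
  calc μ = (ENNReal.ofReal (r ^ b * t ^ (-q)) *
          (ENNReal.ofReal (r ^ (-b)) * ENNReal.ofReal (t ^ q))) * μ := by
        rw [hcancel, one_mul]
    _ = ENNReal.ofReal (r ^ b * t ^ (-q)) *
          (ENNReal.ofReal (r ^ (-b)) * (ENNReal.ofReal (t ^ q) * μ)) := by ring
    _ ≤ ENNReal.ofReal (r ^ b * t ^ (-q)) * ENNReal.ofReal (w ^ q) := mul_le_mul_right h2 _
    _ = ENNReal.ofReal (w ^ q * r ^ b * t ^ (-q)) := by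
        rw [← ENNReal.ofReal_mul (mul_nonneg (Real.rpow_nonneg hr.le _)
          (Real.rpow_nonneg ht.le _))]
        congr 1
        ring

/-- **Weak Morrey spaces embed into smaller strong Morrey spaces**: for `1 < q < ∞`,
`0 ≤ β < n` and `1/q ≤ θ < 1`, every `g ∈ M^{(q,∞),β}(E)` satisfies
`‖g‖_{M^{θq, n-θ(n-β)}(E)} ≤ C ‖g‖_{M^{(q,∞),β}(E)}`. -/
theorem weak_morrey_into_strong_morrey (n : ℕ) (hn : 1 ≤ n) (q β θ : ℝ)
    (hq : 1 < q) (hβ0 : 0 ≤ β) (hβn : β < n) (hθ1 : 1 / q ≤ θ) (hθ2 : θ < 1)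
    (E : Set (Euc n)) (hE : MeasurableSet E) :
    ∃ C : ℝ, 0 < C ∧
      ∀ g : Euc n → ℝ, Measurable g →
        wMorreySup q β E (fun y => |g y|) ≠ ⊤ →
        morreyNorm (θ * q) ((n : ℝ) - θ * ((n : ℝ) - β)) E (fun y => |g y|) ≤
          ENNReal.ofReal C * wMorreySup q β E (fun y => |g y|) := by
  have hq0 : (0:ℝ) < q := one_pos.trans hq
  set p : ℝ := θ * q with hp_def
  have hp1 : 1 ≤ p := by
    have := mul_le_mul_of_nonneg_right hθ1 hq0.le
    rwa [one_div, inv_mul_cancel₀ hq0.ne'] at this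
  have hp0 : 0 < p := one_pos.trans_le hp1
  have hθ0 : 0 < θ := lt_of_lt_of_le (by positivity) hθ1
  have hpq : p < q := by
    have := mul_lt_mul_of_pos_right hθ2 hq0
    simpa [hp_def] using this
  set γ : ℝ := (n:ℝ) - θ * ((n:ℝ) - β) with hγ_def
  set V : ℝ≥0∞ := volume (Metric.ball (0 : Euc n) 1) with hV_def
  have hVt : V ≠ ⊤ := measure_ball_lt_top.ne
  set K : ℝ≥0∞ := ENNReal.ofReal p * (V + ENNReal.ofReal ((q - p)⁻¹)) with hK_def
  have hKt : K ≠ ⊤ :=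
    ENNReal.mul_ne_top ENNReal.ofReal_ne_top
      (ENNReal.add_ne_top.mpr ⟨hVt, ENNReal.ofReal_ne_top⟩)
  have hKp : K ^ (1 / p) ≠ ⊤ := ENNReal.rpow_ne_top_of_nonneg (by positivity) hKt
  refine ⟨(K ^ (1 / p)).toReal + 1, by positivity, ?_⟩
  intro g hg hW
  set ρ : Euc n → ℝ := fun y => |g y| with hρ_def
  have hρm : Measurable ρ := hg.abs
  set W : ℝ≥0∞ := wMorreySup q β E ρ with hW_def
  -- Main pointwise (in `x`, `r`) estimate
  have key : morreySup p γ E ρ ≤ K * W ^ p := by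
    simp only [morreySup]
    refine iSup_le fun x => iSup_le fun hx => iSup_le fun r => iSup_le fun hr => ?_
    have hterm : ENNReal.ofReal (r ^ (-β / q)) *
        (⨆ (s : ℝ) (_ : 0 < s), ENNReal.ofReal s *
          (volume {y ∈ Metric.ball x r ∩ E | s < ρ y}) ^ (1 / q)) ≤ W := by
      rw [hW_def]
      simp only [wMorreySup]
      exact le_iSup_of_le x (le_iSup_of_le hx (le_iSup_of_le r (le_iSup_of_le hr le_rfl)))
    have hterm' : ∀ t : ℝ, 0 < t →
        ENNReal.ofReal (r ^ (-β / q)) * (ENNReal.ofReal t *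
          (volume {y ∈ Metric.ball x r ∩ E | t < ρ y}) ^ (1 / q)) ≤ W := by
      intro t ht
      refine le_trans (mul_le_mul_right ?_ _) hterm
      exact le_iSup_of_le t (le_iSup_of_le ht le_rfl)
    have hμt : ∀ t : ℝ, volume {y ∈ Metric.ball x r ∩ E | t < ρ y} ≠ ⊤ := fun t =>
      ((measure_mono fun y hy => hy.1.1).trans_lt measure_ball_lt_top).ne
    have hsep : ∀ t : ℝ, {a | t < ρ a} ∩ (Metric.ball x r ∩ E) =
        {y ∈ Metric.ball x r ∩ E | t < ρ y} := fun t => by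
      ext y
      simp only [Set.mem_inter_iff, Set.mem_setOf_eq, Set.mem_sep_iff]
      tauto
    have hlc : ∫⁻ y in Metric.ball x r ∩ E, ENNReal.ofReal (ρ y ^ p) =
        ENNReal.ofReal p * ∫⁻ t in Set.Ioi (0:ℝ),
          volume {y ∈ Metric.ball x r ∩ E | t < ρ y} * ENNReal.ofReal (t ^ (p - 1)) := by
      rw [layercake_rpow (volume.restrict (Metric.ball x r ∩ E)) ρ hρm
          (fun y => abs_nonneg (g y)) hp1]
      congr 1
      refine setLIntegral_congr_fun measurableSet_Ioi fun t _ => ?_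
      rw [Measure.restrict_apply (measurableSet_lt measurable_const hρm), hsep t]
    rcases eq_or_ne W 0 with hW0 | hW0
    · -- degenerate case : the weak norm is zero
      have hz : ∀ t : ℝ, 0 < t → volume {y ∈ Metric.ball x r ∩ E | t < ρ y} = 0 := by
        intro t ht
        have h1 := hterm' t ht
        rw [hW0, le_zero_iff] at h1
        rcases mul_eq_zero.mp h1 with h | h
        · exact absurd h (by simp [ENNReal.ofReal_eq_zero, not_le,
            Real.rpow_pos_of_pos hr])
        rcases mul_eq_zero.mp h with h | h
        · exact absurd h (by simp [ENNReal.ofReal_eq_zero, not_le, ht])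
        · rcases ENNReal.rpow_eq_zero_iff.mp h with ⟨h0, _⟩ | ⟨_, hlt⟩
          · exact h0
          · exact absurd hlt (not_lt_of_ge (show (0:ℝ) < 1 / q by positivity).le)
      have hI0 : (∫⁻ t in Set.Ioi (0:ℝ), volume {y ∈ Metric.ball x r ∩ E | t < ρ y} *
          ENNReal.ofReal (t ^ (p - 1))) = 0 := by
        have hae : (fun t : ℝ => volume {y ∈ Metric.ball x r ∩ E | t < ρ y} *
            ENNReal.ofReal (t ^ (p - 1)))
            =ᵐ[volume.restrict (Set.Ioi (0:ℝ))] (fun _ => 0) := by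
          filter_upwards [ae_restrict_mem measurableSet_Ioi] with t ht
          rw [hz t ht, zero_mul]
        rw [lintegral_congr_ae hae, lintegral_zero]
      rw [hlc, hI0, mul_zero, mul_zero]
      exact zero_le
    · -- main case
      set w : ℝ := W.toReal with hw_def
      have hw0 : 0 < w := ENNReal.toReal_pos hW0 hW
      have hWr : W = ENNReal.ofReal w := (ENNReal.ofReal_toReal hW).symm
      set s₀ : ℝ := w * r ^ ((β - (n:ℝ)) / q) with hs₀_def
      have hs₀ : 0 < s₀ := by positivity
      have hdist : ∀ t : ℝ, 0 < t → volume {y ∈ Metric.ball x r ∩ E | t < ρ y} ≤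
          ENNReal.ofReal (w ^ q * r ^ β * t ^ (-q)) := by
        intro t ht
        have h1 := hterm' t ht
        rw [hWr] at h1
        exact dist_aux hq0 hr ht hw0 (hμt t) h1
      -- two real exponent computations
      have hexp1 : (n:ℝ) + (β - (n:ℝ)) / q * p = γ := by
        rw [hγ_def, hp_def]
        field_simp
        ring
      have hexp2 : β + (β - (n:ℝ)) / q * (p - q) = γ := by
        rw [hγ_def, hp_def]
        field_simp
        ring
      have hs₀p : ∀ u : ℝ, s₀ ^ u = w ^ u * r ^ ((β - (n:ℝ)) / q * u) := fun u => by
        rw [hs₀_def, Real.mul_rpow hw0.le (Real.rpow_nonneg hr.le _), ← Real.rpow_mul hr.le]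
      have eq1 : r ^ n * (s₀ ^ (p - 1) * s₀) = w ^ p * r ^ γ := by
        have h1 : s₀ ^ (p - 1) * s₀ = s₀ ^ p := by
          nth_rewrite 2 [← Real.rpow_one s₀]
          rw [← Real.rpow_add hs₀]
          norm_num
        rw [h1, hs₀p p, ← Real.rpow_natCast r n]
        calc (r:ℝ) ^ ((n:ℕ):ℝ) * (w ^ p * r ^ ((β - (n:ℝ)) / q * p))
            = w ^ p * ((r:ℝ) ^ ((n:ℕ):ℝ) * r ^ ((β - (n:ℝ)) / q * p)) := by ring
          _ = w ^ p * r ^ ((n:ℝ) + (β - (n:ℝ)) / q * p) := by rw [← Real.rpow_add hr]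
          _ = w ^ p * r ^ γ := by rw [hexp1]
      have eq2 : w ^ q * r ^ β * (s₀ ^ (p - q) / (q - p)) = (w ^ p * (q - p)⁻¹) * r ^ γ := by
        rw [hs₀p (p - q), div_eq_mul_inv]
        have hwq : w ^ q * w ^ (p - q) = w ^ p := by
          rw [← Real.rpow_add hw0]
          congr 1
          ring
        calc w ^ q * r ^ β * (w ^ (p - q) * r ^ ((β - (n:ℝ)) / q * (p - q)) * (q - p)⁻¹)
            = (w ^ q * w ^ (p - q)) * (q - p)⁻¹ *
                (r ^ β * r ^ ((β - (n:ℝ)) / q * (p - q))) := by ring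
          _ = w ^ p * (q - p)⁻¹ * r ^ (β + (β - (n:ℝ)) / q * (p - q)) := by
              rw [hwq, ← Real.rpow_add hr]
          _ = (w ^ p * (q - p)⁻¹) * r ^ γ := by rw [hexp2]
      -- the tail integral
      have htail : ∫⁻ t in Set.Ioi s₀, ENNReal.ofReal (t ^ (p - 1 - q)) =
          ENNReal.ofReal (s₀ ^ (p - q) / (q - p)) := by
        have hint : IntegrableOn (fun t : ℝ => t ^ (p - 1 - q)) (Set.Ioi s₀) :=
          integrableOn_Ioi_rpow_of_lt (by linarith) hs₀
        have hnn : 0 ≤ᵐ[volume.restrict (Set.Ioi s₀)] fun t : ℝ => t ^ (p - 1 - q) := by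
          filter_upwards [ae_restrict_mem measurableSet_Ioi] with t ht
          exact Real.rpow_nonneg (hs₀.trans ht).le _
        rw [← ofReal_integral_eq_lintegral_ofReal hint hnn,
          integral_Ioi_rpow_of_lt (by linarith) hs₀]
        congr 1
        rw [show p - 1 - q + 1 = p - q from by ring, neg_div, ← div_neg, neg_sub]
      -- bound the two pieces
      have hI₁ : (∫⁻ t in Set.Ioc 0 s₀, volume {y ∈ Metric.ball x r ∩ E | t < ρ y} *
          ENNReal.ofReal (t ^ (p - 1))) ≤ V * ENNReal.ofReal (w ^ p * r ^ γ) := by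
        calc (∫⁻ t in Set.Ioc 0 s₀, volume {y ∈ Metric.ball x r ∩ E | t < ρ y} *
              ENNReal.ofReal (t ^ (p - 1)))
            ≤ ∫⁻ _ in Set.Ioc 0 s₀,
              (ENNReal.ofReal (r ^ n) * V) * ENNReal.ofReal (s₀ ^ (p - 1)) := by
              refine setLIntegral_mono measurable_const fun t ht => ?_
              refine mul_le_mul' ?_
                (ENNReal.ofReal_le_ofReal (Real.rpow_le_rpow ht.1.le ht.2 (by linarith)))
              refine le_trans (measure_mono fun y hy => hy.1.1) ?_
              rw [Measure.addHaar_ball_of_pos volume x hr, finrank_euclideanSpace_fin]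
          _ = (ENNReal.ofReal (r ^ n) * V * ENNReal.ofReal (s₀ ^ (p - 1))) *
              ENNReal.ofReal s₀ := by
              rw [setLIntegral_const, Real.volume_Ioc, sub_zero]
          _ = V * (ENNReal.ofReal (r ^ n) * ENNReal.ofReal (s₀ ^ (p - 1)) *
              ENNReal.ofReal s₀) := by ring
          _ = V * ENNReal.ofReal (r ^ n * (s₀ ^ (p - 1) * s₀)) := by
              rw [← ENNReal.ofReal_mul (by positivity),
                ← ENNReal.ofReal_mul (by positivity)]
              ring_nf
          _ = V * ENNReal.ofReal (w ^ p * r ^ γ) := by rw [eq1]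
      have hI₂ : (∫⁻ t in Set.Ioi s₀, volume {y ∈ Metric.ball x r ∩ E | t < ρ y} *
          ENNReal.ofReal (t ^ (p - 1))) ≤ ENNReal.ofReal ((w ^ p * (q - p)⁻¹) * r ^ γ) := by
        calc (∫⁻ t in Set.Ioi s₀, volume {y ∈ Metric.ball x r ∩ E | t < ρ y} *
              ENNReal.ofReal (t ^ (p - 1)))
            ≤ ∫⁻ t in Set.Ioi s₀,
              ENNReal.ofReal (w ^ q * r ^ β) * ENNReal.ofReal (t ^ (p - 1 - q)) := by
              refine setLIntegral_mono (by fun_prop) fun t ht => ?_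
              have ht0 : 0 < t := hs₀.trans ht
              calc volume {y ∈ Metric.ball x r ∩ E | t < ρ y} * ENNReal.ofReal (t ^ (p - 1))
                  ≤ ENNReal.ofReal (w ^ q * r ^ β * t ^ (-q)) *
                    ENNReal.ofReal (t ^ (p - 1)) := mul_le_mul_left (hdist t ht0) _
                _ = ENNReal.ofReal (w ^ q * r ^ β) * ENNReal.ofReal (t ^ (p - 1 - q)) := by
                    rw [← ENNReal.ofReal_mul (by positivity),
                      ← ENNReal.ofReal_mul (by positivity)]
                    congr 1
                    rw [mul_assoc, ← Real.rpow_add ht0]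
                    congr 1
                    ring
          _ = ENNReal.ofReal (w ^ q * r ^ β) *
              ∫⁻ t in Set.Ioi s₀, ENNReal.ofReal (t ^ (p - 1 - q)) :=
              lintegral_const_mul' _ _ ENNReal.ofReal_ne_top
          _ = ENNReal.ofReal (w ^ q * r ^ β) * ENNReal.ofReal (s₀ ^ (p - q) / (q - p)) := by
              rw [htail]
          _ = ENNReal.ofReal ((w ^ p * (q - p)⁻¹) * r ^ γ) := by
              rw [← ENNReal.ofReal_mul (by positivity), eq2]
      have hmul : ∀ Y : ℝ, 0 ≤ Y →
          ENNReal.ofReal (r ^ (-γ)) * ENNReal.ofReal (Y * r ^ γ) = ENNReal.ofReal Y := by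
        intro Y hY
        rw [← ENNReal.ofReal_mul (Real.rpow_nonneg hr.le _),
          show r ^ (-γ) * (Y * r ^ γ) = Y * (r ^ (-γ) * r ^ γ) from by ring,
          ← Real.rpow_add hr]
        simp
      rw [hlc, ← Set.Ioc_union_Ioi_eq_Ioi hs₀.le,
        lintegral_union measurableSet_Ioi (Set.Ioc_disjoint_Ioi le_rfl)]
      calc ENNReal.ofReal (r ^ (-γ)) * (ENNReal.ofReal p *
            ((∫⁻ t in Set.Ioc 0 s₀, volume {y ∈ Metric.ball x r ∩ E | t < ρ y} *
              ENNReal.ofReal (t ^ (p - 1))) +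
             ∫⁻ t in Set.Ioi s₀, volume {y ∈ Metric.ball x r ∩ E | t < ρ y} *
              ENNReal.ofReal (t ^ (p - 1))))
          ≤ ENNReal.ofReal (r ^ (-γ)) * (ENNReal.ofReal p *
            (V * ENNReal.ofReal (w ^ p * r ^ γ) +
              ENNReal.ofReal ((w ^ p * (q - p)⁻¹) * r ^ γ))) := by
            gcongr
        _ = ENNReal.ofReal p *
            (V * (ENNReal.ofReal (r ^ (-γ)) * ENNReal.ofReal (w ^ p * r ^ γ)) +
              ENNReal.ofReal (r ^ (-γ)) * ENNReal.ofReal ((w ^ p * (q - p)⁻¹) * r ^ γ)) := by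
            ring
        _ = ENNReal.ofReal p * (V * ENNReal.ofReal (w ^ p) +
              ENNReal.ofReal (w ^ p * (q - p)⁻¹)) := by
            rw [hmul _ (by positivity), hmul _ (mul_nonneg (by positivity)
              (inv_nonneg.mpr (by linarith)))]
        _ = K * W ^ p := by
            rw [hK_def, hWr, ENNReal.ofReal_rpow_of_pos hw0,
              show w ^ p * (q - p)⁻¹ = (q - p)⁻¹ * w ^ p from mul_comm _ _,
              ENNReal.ofReal_mul (inv_nonneg.mpr (by linarith))]
            ring
  -- conclude
  simp only [morreyNorm]
  refine le_trans (ENNReal.rpow_le_rpow key (by positivity)) ?_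
  rw [ENNReal.mul_rpow_of_nonneg _ _ (by positivity), ← ENNReal.rpow_mul,
    mul_one_div_cancel hp0.ne', ENNReal.rpow_one]
  refine mul_le_mul_left ?_ W
  calc K ^ (1 / p) = ENNReal.ofReal ((K ^ (1 / p)).toReal) := (ENNReal.ofReal_toReal hKp).symm
    _ ≤ ENNReal.ofReal ((K ^ (1 / p)).toReal + 1) := ENNReal.ofReal_le_ofReal (by linarith)

end
end
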